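/- arXiv:2001.08128 — 4 statements merged into one kernel-verified Lean document; each statement's English description precedes it below -/
import Mathlib

section
/- Wielandt's subnormality criterion restated: a subgroup H of a finite group G is subnormal in G if and only if S_G(H) = G, where S_G(H) = {g ∈ G : H is subnormal in ⟨H, g⟩}. -/
open Subgroup

variable {G : Type*} [Group G]

/-- `Subnormal H K` means there is a chain `H = c 0 ⊴ c 1 ⊴ ⋯ ⊴ c n = K` of
subgroups, each normal in the next. -/
def Subnormal (H K : Subgroup G) : Prop :=
  ∃ (n : ℕ) (c : ℕ → Subgroup G), c 0 = H ∧ c n = K ∧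
    ∀ i < n, c i ≤ c (i + 1) ∧ ∀ x ∈ c (i + 1), ∀ h ∈ c i, x * h * x⁻¹ ∈ c i

/-- Wielandt's subnormalizer of a subgroup `H` of `G`:
the set of `g ∈ G` such that `H` is subnormal in `⟨H, g⟩`. -/
def subnormalizerSet (H : Subgroup G) : Set G :=
  {g : G | Subnormal H (H ⊔ zpowers g)}

section Basics

variable {G' : Type*} [Group G']

lemma subnormal_refl (H : Subgroup G) : Subnormal H H :=
  ⟨0, fun _ => H, rfl, rfl, fun i hi => absurd hi (Nat.not_lt_zero i)⟩

lemma subnormal_step {H K : Subgroup G} (hle : H ≤ K)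
    (hconj : ∀ x ∈ K, ∀ h ∈ H, x * h * x⁻¹ ∈ H) : Subnormal H K := by
  refine ⟨1, fun i => if i = 0 then H else K, by simp, by simp, ?_⟩
  intro i hi
  interval_cases i
  simpa using ⟨hle, hconj⟩

lemma Subnormal.le {H K : Subgroup G} (h : Subnormal H K) : H ≤ K := by
  obtain ⟨n, c, h0, hn, hstep⟩ := h
  have key : ∀ i ≤ n, c 0 ≤ c i := by
    intro i hi
    induction i with
    | zero => exact le_rfl
    | succ j ih =>
      exact le_trans (ih (le_trans (Nat.le_succ j) hi)) (hstep j (Nat.lt_of_lt_of_le (Nat.lt_succ_self j) hi)).1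
  rw [← h0, ← hn]
  exact key n le_rfl

lemma Subnormal.trans {H K L : Subgroup G} (h1 : Subnormal H K) (h2 : Subnormal K L) :
    Subnormal H L := by
  obtain ⟨n, c, hc0, hcn, hc⟩ := h1
  obtain ⟨m, d, hd0, hdm, hd⟩ := h2
  refine ⟨n + m, fun i => if i ≤ n then c i else d (i - n), by simp [hc0], ?_, ?_⟩
  · by_cases hm : m = 0
    · subst hm; simp [hcn, ← hd0, ← hdm]
    · have : ¬ (n + m ≤ n) := by omega
      simp only [this, if_false]
      simpa using hdm
  · intro i hi
    by_cases h1i : i + 1 ≤ n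
    · have h2i : i ≤ n := by omega
      simp only [h1i, h2i, if_true]
      exact hc i (by omega)
    · by_cases h2i : i ≤ n
      · -- i = n, next is d 1
        have hin : i = n := by omega
        have hm : 0 < m := by omega
        subst hin
        simp only [h2i, if_true, h1i, if_false]
        have : i + 1 - i = 1 := by omega
        rw [this, hcn, ← hd0]
        exact hd 0 hm
      · simp only [h1i, h2i, if_false]
        have : i + 1 - n = (i - n) + 1 := by omega
        rw [this]
        exact hd (i - n) (by omega)

/-- Restriction of a subnormal chain to a subgroup. -/
lemma Subnormal.inf_right {H K : Subgroup G} (h : Subnormal H K) (L : Subgroup G) :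
    Subnormal (H ⊓ L) (K ⊓ L) := by
  obtain ⟨n, c, hc0, hcn, hc⟩ := h
  refine ⟨n, fun i => c i ⊓ L, by simp [hc0], by simp [hcn], ?_⟩
  intro i hi
  refine ⟨inf_le_inf_right L (hc i hi).1, ?_⟩
  intro x hx h hh
  rw [Subgroup.mem_inf] at hx hh ⊢
  exact ⟨(hc i hi).2 x hx.1 h hh.1, mul_mem (mul_mem hx.2 hh.2) (inv_mem hx.2)⟩

/-- If `H` is subnormal in `K` then it is subnormal in any intermediate subgroup. -/
lemma Subnormal.of_le {H K L : Subgroup G} (h : Subnormal H K) (h1 : H ≤ L) (h2 : L ≤ K) :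
    Subnormal H L := by
  have := h.inf_right L
  rwa [inf_eq_left.mpr h1, inf_eq_right.mpr h2] at this

lemma Subnormal.map {H K : Subgroup G} (h : Subnormal H K) (f : G →* G') :
    Subnormal (H.map f) (K.map f) := by
  obtain ⟨n, c, hc0, hcn, hc⟩ := h
  refine ⟨n, fun i => (c i).map f, by simp [hc0], by simp [hcn], ?_⟩
  intro i hi
  refine ⟨Subgroup.map_mono (hc i hi).1, ?_⟩
  rintro x hx h hh
  rw [Subgroup.mem_map] at hx hh
  obtain ⟨x', hx', rfl⟩ := hx
  obtain ⟨h', hh', rfl⟩ := hh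
  rw [← f.map_inv, ← f.map_mul, ← f.map_mul]
  exact Subgroup.mem_map.mpr ⟨x' * h' * x'⁻¹, (hc i hi).2 x' hx' h' hh', rfl⟩

lemma Subnormal.comap {H' K' : Subgroup G'} (h : Subnormal H' K') (f : G →* G') :
    Subnormal (H'.comap f) (K'.comap f) := by
  obtain ⟨n, c, hc0, hcn, hc⟩ := h
  refine ⟨n, fun i => (c i).comap f, by simp [hc0], by simp [hcn], ?_⟩
  intro i hi
  refine ⟨Subgroup.comap_mono (hc i hi).1, ?_⟩
  intro x hx h hh
  simp only [Subgroup.mem_comap, f.map_mul, f.map_inv] at *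
  exact (hc i hi).2 (f x) hx (f h) hh

lemma subnormal_of_normal {H : Subgroup G} (hn : H.Normal) : Subnormal H ⊤ :=
  subnormal_step le_top (fun x _ h hh => hn.conj_mem h hh x)

end Basics

section Infra

variable {G' : Type*} [Group G']

/-- Conjugate of a subgroup. -/
def cnj (g : G) (H : Subgroup G) : Subgroup G := H.map (MulAut.conj g).toMonoidHom

lemma mem_cnj {g y : G} {H : Subgroup G} : y ∈ cnj g H ↔ ∃ h ∈ H, y = g * h * g⁻¹ := by
  simp only [cnj, Subgroup.mem_map, MulEquiv.coe_toMonoidHom, MulAut.conj_apply]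
  tauto

lemma conj_mem_cnj {g a : G} {H : Subgroup G} (ha : a ∈ H) : g * a * g⁻¹ ∈ cnj g H :=
  mem_cnj.mpr ⟨a, ha, rfl⟩

lemma cnj_le {g : G} {H K : Subgroup G} (h : H ≤ K) : cnj g H ≤ cnj g K :=
  Subgroup.map_mono h

lemma cnj_cnj_inv (g : G) (H : Subgroup G) : cnj g (cnj g⁻¹ H) = H := by
  ext y
  simp only [mem_cnj]
  constructor
  · rintro ⟨h, ⟨a, ha, rfl⟩, rfl⟩
    group
    simpa using ha
  · intro hy
    exact ⟨g⁻¹ * y * g, ⟨y, hy, by group⟩, by group⟩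

lemma cnj_inv_cnj (g : G) (H : Subgroup G) : cnj g⁻¹ (cnj g H) = H := by
  have := cnj_cnj_inv g⁻¹ H
  rwa [inv_inv] at this

lemma cnj_le_iff {g : G} {H K : Subgroup G} : cnj g H ≤ K ↔ H ≤ cnj g⁻¹ K := by
  constructor
  · intro h
    intro a ha
    have := h (conj_mem_cnj ha)
    rw [show a = g⁻¹ * (g * a * g⁻¹) * g⁻¹⁻¹ by group]
    exact conj_mem_cnj this
  · intro h
    intro y hy
    obtain ⟨a, ha, rfl⟩ := mem_cnj.mp hy
    have := h ha
    obtain ⟨b, hb, hab⟩ := mem_cnj.mp this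
    have : g * a * g⁻¹ = b := by rw [hab]; group
    rwa [this]

lemma cnj_top (g : G) : cnj g (⊤ : Subgroup G) = ⊤ := by
  ext y
  simp only [Subgroup.mem_top, iff_true, mem_cnj]
  exact ⟨g⁻¹ * y * g, trivial, by group⟩

lemma cnj_ne_top {g : G} {H : Subgroup G} (h : H ≠ ⊤) : cnj g H ≠ ⊤ := by
  intro hc
  apply h
  have := congrArg (cnj g⁻¹) hc
  rwa [cnj_inv_cnj, cnj_top] at this

lemma Subnormal.cnj {H K : Subgroup G} (h : Subnormal H K) (g : G) :
    Subnormal (cnj g H) (cnj g K) := h.map _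

/-- Transfer of subnormality into a subgroup (as an abstract group). -/
lemma Subnormal.subgroupOf {A B Z : Subgroup G} (h : Subnormal A B) :
    Subnormal (A.subgroupOf Z) (B.subgroupOf Z) := h.comap Z.subtype

lemma subnormal_of_subgroupOf {A B Z : Subgroup G} (hA : A ≤ Z) (hB : B ≤ Z)
    (h : Subnormal (A.subgroupOf Z) (B.subgroupOf Z)) : Subnormal A B := by
  have := h.map Z.subtype
  rwa [Subgroup.subgroupOf_map_subtype, Subgroup.subgroupOf_map_subtype,
    inf_eq_left.mpr hA, inf_eq_left.mpr hB] at this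

lemma subnormal_subgroupOf_top_iff {A Z : Subgroup G} (hA : A ≤ Z) :
    Subnormal (A.subgroupOf Z) (⊤ : Subgroup Z) ↔ Subnormal A Z := by
  rw [← Subgroup.subgroupOf_self (H := Z)]
  exact ⟨fun h => subnormal_of_subgroupOf hA le_rfl h, fun h => h.subgroupOf⟩

lemma subnormal_top_map {A : Subgroup G} (f : G →* G') (hf : Function.Surjective f)
    (h : Subnormal A ⊤) : Subnormal (A.map f) ⊤ := by
  have := h.map f
  rwa [Subgroup.map_top_of_surjective f hf] at this

/-- Cardinality facts. -/
lemma card_lt_of_lt [Finite G] {A B : Subgroup G} (h : A < B) : Nat.card A < Nat.card B := by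
  have h1 : (A : Set G) ⊂ (B : Set G) := by
    rw [Set.ssubset_iff_subset_ne]
    exact ⟨h.le, fun hc => h.ne (SetLike.coe_injective hc)⟩
  have h2 := Set.ncard_lt_ncard h1 (Set.toFinite _)
  rwa [← Nat.card_coe_set_eq, ← Nat.card_coe_set_eq] at h2

lemma card_top_eq [Finite G] : Nat.card (⊤ : Subgroup G) = Nat.card G :=
  Nat.card_congr Subgroup.topEquiv.toEquiv

lemma eq_of_le_of_card_le [Finite G] {A B : Subgroup G} (h : A ≤ B)
    (hc : Nat.card B ≤ Nat.card A) : A = B := by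
  by_contra hne
  exact absurd hc (not_le.mpr (card_lt_of_lt (lt_of_le_of_ne h hne)))

/-- Maximal (proper) subgroups. -/
def IsMaxSub (M : Subgroup G) : Prop := M ≠ ⊤ ∧ ∀ X : Subgroup G, M ≤ X → X = M ∨ X = ⊤

lemma exists_max_over [Finite G] {Y : Subgroup G} (h : Y ≠ ⊤) :
    ∃ M : Subgroup G, IsMaxSub M ∧ Y ≤ M := by
  by_cases hY : IsMaxSub Y
  · exact ⟨Y, hY, le_rfl⟩
  · have : ∃ X : Subgroup G, Y ≤ X ∧ X ≠ Y ∧ X ≠ ⊤ := by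
      by_contra hc
      push_neg at hc
      exact hY ⟨h, fun X hX => by
        by_cases h1 : X = Y
        · left; exact h1
        · right; exact hc X hX h1⟩
    obtain ⟨X, hYX, hXY, hXt⟩ := this
    have hcard : Nat.card G - Nat.card X < Nat.card G - Nat.card Y := by
      have h1 : Nat.card Y < Nat.card X := card_lt_of_lt (lt_of_le_of_ne hYX (Ne.symm hXY))
      have h3 : Nat.card X < Nat.card G := by
        have := card_lt_of_lt (lt_top_iff_ne_top.mpr hXt)
        rwa [card_top_eq] at this
      have h4 : Nat.card Y ≤ Nat.card G := by
        have := card_lt_of_lt (lt_top_iff_ne_top.mpr h)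
        rw [card_top_eq] at this
        omega
      omega
    have := exists_max_over (Y := X) hXt
    obtain ⟨M, hM, hXM⟩ := this
    exact ⟨M, hM, le_trans hYX hXM⟩
termination_by Nat.card G - Nat.card Y

lemma max_eq_of_le {M Q : Subgroup G} (hM : IsMaxSub M) (hQ : IsMaxSub Q) (h : M ≤ Q) : M = Q :=
  ((hM.2 Q h).resolve_right hQ.1).symm

/-- Existence of a minimal nontrivial normal subgroup. -/
lemma exists_min_normal [Finite G] (h : Nontrivial G) :
    ∃ N : Subgroup G, N.Normal ∧ N ≠ ⊥ ∧
      ∀ N' : Subgroup G, N'.Normal → N' ≤ N → N' = ⊥ ∨ N' = N := by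
  classical
  let s : Set ℕ := {n | ∃ N : Subgroup G, N.Normal ∧ N ≠ ⊥ ∧ Nat.card N = n}
  have hs : s.Nonempty := ⟨Nat.card (⊤ : Subgroup G), ⊤, (⟨fun _ _ _ => trivial⟩ : (⊤ : Subgroup G).Normal), by
      simp only [ne_eq]
      intro hc
      obtain ⟨x, y, hxy⟩ := h
      have : x ∈ (⊥ : Subgroup G) := by rw [← hc]; trivial
      have hy : y ∈ (⊥ : Subgroup G) := by rw [← hc]; trivial
      simp only [Subgroup.mem_bot] at this hy
      exact hxy (this.trans hy.symm), rfl⟩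
  obtain ⟨N, hN1, hN2, hN3⟩ := Nat.sInf_mem hs
  refine ⟨N, hN1, hN2, ?_⟩
  intro N' h1 h2
  by_cases hb : N' = ⊥
  · left; exact hb
  · right
    have : Nat.card N ≤ Nat.card N' := by
      rw [hN3]
      exact Nat.sInf_le ⟨N', h1, hb, rfl⟩
    exact eq_of_le_of_card_le h2 this

end Infra

section Ncl

/-- Normal closure of `A` relative to `K`: the subgroup generated by all `K`-conjugates of `A`. -/
def nclIn (A K : Subgroup G) : Subgroup G :=
  Subgroup.closure (⋃ k ∈ (K : Set G), (fun h => k * h * k⁻¹) '' (A : Set G))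

lemma conj_mem_nclIn {A K : Subgroup G} {k a : G} (hk : k ∈ K) (ha : a ∈ A) :
    k * a * k⁻¹ ∈ nclIn A K :=
  Subgroup.subset_closure (Set.mem_biUnion hk ⟨a, ha, rfl⟩)

lemma le_nclIn (A K : Subgroup G) : A ≤ nclIn A K := by
  intro a ha
  have := conj_mem_nclIn (one_mem K) ha
  simpa using this

lemma nclIn_le {A K Y : Subgroup G} (h : ∀ k ∈ K, ∀ a ∈ A, k * a * k⁻¹ ∈ Y) :
    nclIn A K ≤ Y := by
  apply (Subgroup.closure_le _).mpr
  rintro y hy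
  simp only [Set.mem_iUnion, Set.mem_image, SetLike.mem_coe] at hy
  obtain ⟨k, hk, a, ha, rfl⟩ := hy
  exact h k hk a ha

lemma nclIn_le_of_le {A K : Subgroup G} (hAK : A ≤ K) : nclIn A K ≤ K :=
  nclIn_le (fun k hk a ha => mul_mem (mul_mem hk (hAK ha)) (inv_mem hk))

lemma conj_nclIn_mem {A K : Subgroup G} {x : G} (hx : x ∈ K) :
    ∀ y ∈ nclIn A K, x * y * x⁻¹ ∈ nclIn A K := by
  have hle : cnj x (nclIn A K) ≤ nclIn A K := by
    rw [cnj, nclIn, MonoidHom.map_closure]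
    apply (Subgroup.closure_le _).mpr
    rintro y ⟨z, hz, rfl⟩
    simp only [Set.mem_iUnion, Set.mem_image, SetLike.mem_coe] at hz
    obtain ⟨k, hk, a, ha, rfl⟩ := hz
    have he : (MulAut.conj x).toMonoidHom (k * a * k⁻¹) = (x * k) * a * (x * k)⁻¹ := by
      simp only [MulEquiv.coe_toMonoidHom, MulAut.conj_apply]
      group
    rw [he]
    exact SetLike.mem_coe.mpr (conj_mem_nclIn (mul_mem hx hk) ha)
  intro y hy
  exact hle (conj_mem_cnj hy)

lemma normalizes_of_nclIn_eq {A K : Subgroup G} (h : nclIn A K = A) :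
    ∀ x ∈ K, ∀ a ∈ A, x * a * x⁻¹ ∈ A :=
  fun x hx a ha => h ▸ conj_mem_nclIn hx ha

/-- The stall lemma: a proper subnormal subgroup has proper relative normal closure. -/
lemma stall_rel {A K : Subgroup G} (h : Subnormal A K) (hn : nclIn A K = K) : A = K := by
  obtain ⟨n, c, hc0, hcn, hc⟩ := h
  have mono : ∀ i d, i + d ≤ n → c i ≤ c (i + d) := by
    intro i d
    induction d with
    | zero => intro _; exact le_rfl
    | succ e ih =>
      intro hle
      have := (hc (i + e) (by omega)).1
      calc c i ≤ c (i + e) := ih (by omega)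
        _ ≤ c (i + e + 1) := this
  have key : ∀ i, i ≤ n → c (n - i) = K := by
    intro i
    induction i with
    | zero => intro _; simpa using hcn
    | succ j ih =>
      intro hj
      have h1 : c (n - j) = K := ih (by omega)
      have hidx : (n - (j + 1)) + 1 = n - j := by omega
      have hlt : n - (j + 1) < n := by omega
      have hcond := (hc (n - (j + 1)) hlt).2
      rw [hidx, h1] at hcond
      have hle1 : c (n - (j + 1)) ≤ K := by
        have := mono (n - (j + 1)) (j + 1) (by omega)
        rw [show n - (j + 1) + (j + 1) = n by omega, hcn] at this
        exact this
      have hle2 : K ≤ c (n - (j + 1)) := by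
        rw [← hn]
        apply nclIn_le
        intro k hk a ha
        apply hcond k (by rw [← h1] at hk ⊢; exact hk) a
        have : c 0 ≤ c (n - (j+1)) := by
          have := mono 0 (n - (j + 1)) (by omega)
          simpa using this
        exact this (hc0 ▸ ha)
      exact le_antisymm hle1 hle2
  have := key n le_rfl
  rw [Nat.sub_self, hc0] at this
  exact this

lemma ncl_top_normal (A : Subgroup G) : (nclIn A ⊤).Normal :=
  ⟨fun y hy g => conj_nclIn_mem (Subgroup.mem_top g) y hy⟩

lemma ncl_top_ne_top {A : Subgroup G} (h : Subnormal A ⊤) (hne : A ≠ ⊤) :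
    nclIn A ⊤ ≠ ⊤ :=
  fun hc => hne (stall_rel h hc)

end Ncl

section MNS

universe u

/-- Wielandt: a minimal normal subgroup normalizes every subnormal subgroup. -/
lemma min_normal_normalizes : ∀ (n : ℕ) {G : Type u} [Group G] [Finite G]
    (N A : Subgroup G), Nat.card G ≤ n →
    N.Normal → (∀ N' : Subgroup G, N'.Normal → N' ≤ N → N' = ⊥ ∨ N' = N) →
    Subnormal A ⊤ → N ≤ (Subgroup.normalizer (A : Set G)) := by
  intro n
  induction n with
  | zero =>
    intro G _ _ N A hcard _ _ _
    exfalso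
    have : 0 < Nat.card G := Nat.card_pos
    omega
  | succ m ih =>
    intro G _ _ N A hcard hN hNmin hA
    classical
    by_cases hAtop : A = ⊤
    · subst hAtop
      intro x _
      rw [Subgroup.mem_normalizer_iff]
      intro h
      simp
    -- the normal closure of A
    set A₁ : Subgroup G := nclIn A ⊤ with hA₁def
    have hA₁normal : A₁.Normal := ncl_top_normal A
    have hA₁ne : A₁ ≠ ⊤ := ncl_top_ne_top hA hAtop
    have hAA₁ : A ≤ A₁ := le_nclIn A ⊤
    by_cases hint : N ⊓ A₁ = ⊥
    · -- N centralizes A₁, hence normalizes A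
      have hcomm : ∀ x ∈ N, ∀ a ∈ A₁, x * a * x⁻¹ = a := by
        intro x hx a ha
        have h1 : x * a * x⁻¹ * a⁻¹ ∈ N := by
          have : x * a * x⁻¹ * a⁻¹ = x * (a * x⁻¹ * a⁻¹) := by group
          rw [this]
          exact mul_mem hx (by
            have := hN.conj_mem x⁻¹ (inv_mem hx) a
            simpa using this)
        have h2 : x * a * x⁻¹ * a⁻¹ ∈ A₁ := by
          exact mul_mem (hA₁normal.conj_mem a ha x) (inv_mem ha)
        have : x * a * x⁻¹ * a⁻¹ ∈ N ⊓ A₁ := ⟨h1, h2⟩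
        rw [hint, Subgroup.mem_bot] at this
        have := mul_eq_one_iff_eq_inv.mp this
        rw [this]
        group
      intro x hx
      rw [Subgroup.mem_normalizer_iff]
      intro a
      constructor
      · intro ha
        rw [hcomm x hx a (hAA₁ ha)]
        exact ha
      · intro ha
        have hb : x * a * x⁻¹ ∈ A₁ := hAA₁ ha
        have haA₁ : a ∈ A₁ := by
          have : a = x⁻¹ * (x * a * x⁻¹) * x⁻¹⁻¹ := by group
          rw [this]
          exact hA₁normal.conj_mem _ hb x⁻¹
        have := hcomm x hx a haA₁
        rwa [this] at ha
    · -- N ≤ A₁; use the socle argument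
      have hNle : N ≤ A₁ := by
        rcases hNmin (N ⊓ A₁) ⟨fun g hg x => ⟨hN.conj_mem g hg.1 x, hA₁normal.conj_mem g hg.2 x⟩⟩
          inf_le_left with h | h
        · exact absurd h hint
        · rw [← h]; exact inf_le_right
      -- stable subgroups: X ≤ N, nontrivial, invariant under conjugation by A₁
      let stable : Subgroup G → Prop := fun X => ∀ k ∈ A₁, ∀ x ∈ X, k * x * k⁻¹ ∈ X
      let P : Subgroup G → Prop := fun X => X ≤ N ∧ X ≠ ⊥ ∧ stable X ∧
        ∀ X', X' ≤ X → stable X' → X' = ⊥ ∨ X' = X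
      -- existence of a minimal stable subgroup
      have hPex : ∃ X, P X := by
        let s : Set ℕ := {k | ∃ X : Subgroup G, X ≤ N ∧ X ≠ ⊥ ∧ stable X ∧ Nat.card X = k}
        have hNbot : N ≠ ⊥ := by
          intro hc
          rw [hc] at hint
          simp at hint
        have hs : s.Nonempty := ⟨Nat.card N, N, le_rfl, hNbot,
          fun k _ x hx => hN.conj_mem x hx k, rfl⟩
        obtain ⟨X, hX1, hX2, hX3, hX4⟩ := Nat.sInf_mem hs
        refine ⟨X, hX1, hX2, hX3, ?_⟩
        intro X' hle hst
        by_cases hb : X' = ⊥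
        · left; exact hb
        · right
          have : Nat.card X ≤ Nat.card X' := by
            rw [hX4]
            exact Nat.sInf_le ⟨X', le_trans hle hX1, hb, hst, rfl⟩
          exact eq_of_le_of_card_le hle this
      -- conjugation stability of P
      have hPconj : ∀ (g : G) (X : Subgroup G), P X → P (cnj g X) := by
        intro g X ⟨h1, h2, h3, h4⟩
        refine ⟨?_, ?_, ?_, ?_⟩
        · intro y hy
          obtain ⟨x, hx, rfl⟩ := mem_cnj.mp hy
          exact hN.conj_mem x (h1 hx) g
        · intro hc
          apply h2
          rw [eq_bot_iff]
          intro x hx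
          have : g * x * g⁻¹ ∈ cnj g X := conj_mem_cnj hx
          rw [hc, Subgroup.mem_bot] at this
          have : x = 1 := by
            have hgx : g * x * g⁻¹ = 1 := this
            have := congrArg (fun z => g⁻¹ * z * g) hgx
            simpa [mul_assoc] using this
          simp [this]
        · intro k hk y hy
          obtain ⟨x, hx, rfl⟩ := mem_cnj.mp hy
          have hkg : g⁻¹ * k * g ∈ A₁ := by
            have := hA₁normal.conj_mem k hk g⁻¹
            simpa using this
          have hin : (g⁻¹ * k * g) * x * (g⁻¹ * k * g)⁻¹ ∈ X := h3 _ hkg x hx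
          have : k * (g * x * g⁻¹) * k⁻¹ = g * ((g⁻¹ * k * g) * x * (g⁻¹ * k * g)⁻¹) * g⁻¹ := by
            group
          rw [this]
          exact conj_mem_cnj hin
        · intro X' hle hst
          have hle' : cnj g⁻¹ X' ≤ X := by
            have := cnj_le (g := g⁻¹) hle
            rwa [cnj_inv_cnj] at this
          have hst' : stable (cnj g⁻¹ X') := by
            intro k hk y hy
            obtain ⟨x, hx, rfl⟩ := mem_cnj.mp hy
            have hkg : g * k * g⁻¹ ∈ A₁ := hA₁normal.conj_mem k hk g
            have hin : (g * k * g⁻¹) * x * (g * k * g⁻¹)⁻¹ ∈ X' := hst _ hkg x hx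
            have : k * (g⁻¹ * x * g⁻¹⁻¹) * k⁻¹ = g⁻¹ * ((g * k * g⁻¹) * x * (g * k * g⁻¹)⁻¹) * g⁻¹⁻¹ := by
              group
            rw [this]
            exact conj_mem_cnj hin
          rcases h4 _ hle' hst' with h | h
          · left
            have := congrArg (cnj g) h
            rwa [cnj_cnj_inv, cnj, Subgroup.map_bot] at this
          · right
            have := congrArg (cnj g) h
            rwa [cnj_cnj_inv] at this
      -- each minimal stable subgroup normalizes A (by induction inside A₁)
      have hPnorm : ∀ X, P X → (X : Set G) ⊆ ((Subgroup.normalizer (A : Set G)) : Set G) := by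
        intro X ⟨h1, h2, h3, h4⟩
        have hXA₁ : X ≤ A₁ := le_trans h1 hNle
        -- move into the group A₁
        have hcardA₁ : Nat.card A₁ ≤ m := by
          have := card_lt_of_lt (lt_top_iff_ne_top.mpr hA₁ne)
          rw [card_top_eq] at this
          omega
        have hNtnormal : (X.subgroupOf A₁).Normal := by
          constructor
          intro xt hxt gt
          rw [Subgroup.mem_subgroupOf] at hxt ⊢
          exact h3 _ gt.2 _ hxt
        have hNtmin : ∀ N' : Subgroup A₁, N'.Normal → N' ≤ X.subgroupOf A₁ →
            N' = ⊥ ∨ N' = X.subgroupOf A₁ := by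
          intro N' hN'normal hN'le
          have hmaple : N'.map A₁.subtype ≤ X := by
            have := Subgroup.map_mono (f := A₁.subtype) hN'le
            rwa [Subgroup.subgroupOf_map_subtype, inf_eq_left.mpr hXA₁] at this
          have hmapst : stable (N'.map A₁.subtype) := by
            intro k hk y hy
            obtain ⟨yt, hyt, rfl⟩ := Subgroup.mem_map.mp hy
            have : (⟨k, hk⟩ : A₁) * yt * (⟨k, hk⟩ : A₁)⁻¹ ∈ N' := hN'normal.conj_mem yt hyt _
            exact Subgroup.mem_map.mpr ⟨_, this, rfl⟩
          rcases h4 _ hmaple hmapst with h | h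
          · left
            apply Subgroup.map_injective A₁.subtype_injective
            rw [h, Subgroup.map_bot]
          · right
            apply Subgroup.map_injective A₁.subtype_injective
            rw [h, Subgroup.subgroupOf_map_subtype, inf_eq_left.mpr hXA₁]
        have hAtsn : Subnormal (A.subgroupOf A₁) (⊤ : Subgroup A₁) :=
          (subnormal_subgroupOf_top_iff hAA₁).mpr (hA.of_le hAA₁ le_top)
        have hres := ih (G := A₁) (X.subgroupOf A₁) (A.subgroupOf A₁) hcardA₁ hNtnormal hNtmin hAtsn
        -- transfer back
        intro x hx
        have hxA₁ : x ∈ A₁ := hXA₁ hx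
        have hxt : (⟨x, hxA₁⟩ : A₁) ∈ X.subgroupOf A₁ := Subgroup.mem_subgroupOf.mpr hx
        have hnorm := hres hxt
        rw [Subgroup.mem_normalizer_iff] at hnorm
        rw [SetLike.mem_coe, Subgroup.mem_normalizer_iff]
        intro a
        constructor
        · intro ha
          have haA₁ : a ∈ A₁ := hAA₁ ha
          have := (hnorm ⟨a, haA₁⟩).mp (Subgroup.mem_subgroupOf.mpr ha)
          rw [Subgroup.mem_subgroupOf] at this
          exact this
        · intro ha
          have haA₁ : a ∈ A₁ := by
            have h1' : x * a * x⁻¹ ∈ A₁ := hAA₁ ha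
            have : a = x⁻¹ * (x * a * x⁻¹) * x⁻¹⁻¹ := by group
            rw [this]
            exact mul_mem (mul_mem (inv_mem hxA₁) h1') (inv_mem (inv_mem hxA₁))
          have := (hnorm ⟨a, haA₁⟩).mpr (by
            rw [Subgroup.mem_subgroupOf]
            exact ha)
          rw [Subgroup.mem_subgroupOf] at this
          exact this
      -- the socle: join of all minimal stable subgroups is normal, nontrivial, ≤ N
      let Soc : Subgroup G := Subgroup.closure (⋃ X ∈ {X | P X}, (X : Set G))
      have hSnormal : Soc.Normal := by
        constructor
        intro y hy g
        have hle : cnj g Soc ≤ Soc := by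
          rw [cnj, MonoidHom.map_closure]
          apply (Subgroup.closure_le _).mpr
          rintro z ⟨w, hw, rfl⟩
          simp only [Set.mem_iUnion, SetLike.mem_coe, Set.mem_setOf_eq] at hw
          obtain ⟨X, hX, hwX⟩ := hw
          apply Subgroup.subset_closure
          simp only [Set.mem_iUnion, SetLike.mem_coe, Set.mem_setOf_eq]
          exact ⟨cnj g X, hPconj g X hX, conj_mem_cnj hwX⟩
        exact hle (conj_mem_cnj hy)
      have hSle : Soc ≤ N := by
        apply (Subgroup.closure_le _).mpr
        rintro z hz
        simp only [Set.mem_iUnion, SetLike.mem_coe, Set.mem_setOf_eq] at hz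
        obtain ⟨X, hX, hzX⟩ := hz
        exact hX.1 hzX
      have hSbot : Soc ≠ ⊥ := by
        obtain ⟨X, hX⟩ := hPex
        intro hc
        apply hX.2.1
        rw [eq_bot_iff]
        intro x hx
        have : x ∈ Soc := Subgroup.subset_closure (by
          simp only [Set.mem_iUnion, SetLike.mem_coe, Set.mem_setOf_eq]
          exact ⟨X, hX, hx⟩)
        rw [hc] at this
        exact this
      have hSN : Soc = N := (hNmin Soc hSnormal hSle).resolve_left hSbot
      -- conclude
      rw [← hSN]
      apply (Subgroup.closure_le _).mpr
      rintro z hz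
      simp only [Set.mem_iUnion, SetLike.mem_coe, Set.mem_setOf_eq] at hz
      obtain ⟨X, hX, hzX⟩ := hz
      exact hPnorm X hX hzX

end MNS

section Join

universe u

lemma cnj_eq_of_mem_normalizer {x : G} {A : Subgroup G} (h : x ∈ (Subgroup.normalizer (A : Set G))) :
    cnj x A = A := by
  rw [Subgroup.mem_normalizer_iff] at h
  ext y
  rw [mem_cnj]
  constructor
  · rintro ⟨a, ha, rfl⟩
    exact (h a).mp ha
  · intro hy
    refine ⟨x⁻¹ * y * x, ?_, by group⟩
    apply (h _).mpr
    have : x * (x⁻¹ * y * x) * x⁻¹ = y := by group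
    rwa [this]

lemma mem_normalizer_of_cnj_eq {x : G} {J : Subgroup G} (h : cnj x J = J) :
    x ∈ (Subgroup.normalizer (J : Set G)) := by
  rw [Subgroup.mem_normalizer_iff]
  intro a
  constructor
  · intro ha
    rw [← h]
    exact conj_mem_cnj ha
  · intro ha
    rw [← h, mem_cnj] at ha
    obtain ⟨j, hj, hjeq⟩ := ha
    have : a = j := by
      have := congrArg (fun z => x⁻¹ * z * x) hjeq
      simpa [mul_assoc] using this
    rwa [this]

lemma cnj_sup (x : G) (A B : Subgroup G) : cnj x (A ⊔ B) = cnj x A ⊔ cnj x B :=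
  Subgroup.map_sup A B _

/-- Wielandt's join theorem: the join of two subnormal subgroups is subnormal. -/
lemma join_subnormal : ∀ (n : ℕ) {G : Type u} [Group G] [Finite G] (A B : Subgroup G),
    Nat.card G ≤ n → Subnormal A ⊤ → Subnormal B ⊤ → Subnormal (A ⊔ B) ⊤ := by
  intro n
  induction n with
  | zero =>
    intro G _ _ A B hcard _ _
    exfalso
    have : 0 < Nat.card G := Nat.card_pos
    omega
  | succ m ih =>
    intro G _ _ A B hcard hA hB
    classical
    set J := A ⊔ B with hJdef
    by_cases hJ : J = ⊤
    · rw [hJ]; exact subnormal_refl ⊤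
    have hnt : Nontrivial G := by
      rcases subsingleton_or_nontrivial G with h | h
      · exfalso
        apply hJ
        rw [eq_top_iff]
        intro x _
        have : x = 1 := Subsingleton.elim x 1
        rw [this]
        exact one_mem J
      · exact h
    obtain ⟨N, hN1, hN2, hN3⟩ := exists_min_normal hnt
    haveI := hN1
    set JN := J ⊔ N with hJNdef
    -- JN is subnormal via the quotient G/N
    have hJNsn : Subnormal JN ⊤ := by
      set φ := QuotientGroup.mk' N with hφdef
      have hφsurj : Function.Surjective φ := QuotientGroup.mk'_surjective N
      have hcardq : Nat.card (G ⧸ N) ≤ m := by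
        have h1 : Nat.card N * N.index = Nat.card G := N.card_mul_index
        have h2 : 1 < Nat.card N := (Subgroup.one_lt_card_iff_ne_bot N).mpr hN2
        have h3 : Nat.card (G ⧸ N) = N.index := rfl
        have h4 : 0 < N.index := by
          by_contra hc
          push_neg at hc
          interval_cases hi : N.index <;> simp_all
          have : 0 < Nat.card G := Nat.card_pos
          omega
        have h5 : 2 * N.index ≤ Nat.card G := by
          rw [← h1]
          exact Nat.mul_le_mul_right _ h2
        omega
      have hq := ih (A.map φ) (B.map φ) hcardq
        (subnormal_top_map φ hφsurj hA) (subnormal_top_map φ hφsurj hB)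
      rw [← Subgroup.map_sup] at hq
      have := hq.comap φ
      rwa [Subgroup.comap_top, Subgroup.comap_map_eq, QuotientGroup.ker_mk'] at this
    by_cases hJN : JN = ⊤
    · -- N normalizes A and B, hence J, and J ⊔ N = ⊤ gives J normal
      have hnA : N ≤ (Subgroup.normalizer (A : Set G)) :=
        min_normal_normalizes (Nat.card G) N A le_rfl hN1 hN3 hA
      have hnB : N ≤ (Subgroup.normalizer (B : Set G)) :=
        min_normal_normalizes (Nat.card G) N B le_rfl hN1 hN3 hB
      have hnJ : (Subgroup.normalizer (J : Set G)) = ⊤ := by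
        rw [eq_top_iff, ← hJN, hJNdef]
        apply sup_le
        · exact Subgroup.le_normalizer
        · intro x hx
          apply mem_normalizer_of_cnj_eq
          rw [hJdef, cnj_sup, cnj_eq_of_mem_normalizer (hnA hx),
            cnj_eq_of_mem_normalizer (hnB hx)]
      exact subnormal_of_normal (Subgroup.normalizer_eq_top_iff.mp hnJ)
    · -- restrict to the proper subgroup JN
      have hAJN : A ≤ JN := le_trans le_sup_left (le_sup_left : J ≤ JN)
      have hBJN : B ≤ JN := le_trans le_sup_right (le_sup_left : J ≤ JN)
      have hcardJN : Nat.card JN ≤ m := by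
        have := card_lt_of_lt (lt_top_iff_ne_top.mpr hJN)
        rw [card_top_eq] at this
        omega
      have h1 := ih (A.subgroupOf JN) (B.subgroupOf JN) hcardJN
        ((subnormal_subgroupOf_top_iff hAJN).mpr (hA.of_le hAJN le_top))
        ((subnormal_subgroupOf_top_iff hBJN).mpr (hB.of_le hBJN le_top))
      have hsup : A.subgroupOf JN ⊔ B.subgroupOf JN = J.subgroupOf JN := by
        apply Subgroup.map_injective JN.subtype_injective
        rw [Subgroup.map_sup, Subgroup.subgroupOf_map_subtype, Subgroup.subgroupOf_map_subtype,
          Subgroup.subgroupOf_map_subtype, inf_eq_left.mpr hAJN, inf_eq_left.mpr hBJN,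
          inf_eq_left.mpr (le_sup_left : J ≤ JN)]
      rw [hsup] at h1
      exact ((subnormal_subgroupOf_top_iff (le_sup_left : J ≤ JN)).mp h1).trans hJNsn

end Join

section Zipper

variable [Finite G]

/-- Relative version of the join theorem. -/
lemma rel_join {Z A B : Subgroup G} (hA : A ≤ Z) (hB : B ≤ Z)
    (h1 : Subnormal A Z) (h2 : Subnormal B Z) : Subnormal (A ⊔ B) Z := by
  have j := join_subnormal (Nat.card Z) (A.subgroupOf Z) (B.subgroupOf Z) le_rfl
    ((subnormal_subgroupOf_top_iff hA).mpr h1) ((subnormal_subgroupOf_top_iff hB).mpr h2)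
  have hsup : A.subgroupOf Z ⊔ B.subgroupOf Z = (A ⊔ B).subgroupOf Z := by
    apply Subgroup.map_injective Z.subtype_injective
    rw [Subgroup.map_sup, Subgroup.subgroupOf_map_subtype, Subgroup.subgroupOf_map_subtype,
      Subgroup.subgroupOf_map_subtype, inf_eq_left.mpr hA, inf_eq_left.mpr hB,
      inf_eq_left.mpr (sup_le hA hB)]
  rw [hsup] at j
  exact (subnormal_subgroupOf_top_iff (sup_le hA hB)).mp j

/-- A conjugate of `S` contained in a proper subgroup `Z` is subnormal in `Z`,
assuming `S` is subnormal in every proper overgroup. -/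
lemma cnj_subnormal_of_le {S Z : Subgroup G} {x : G}
    (hH1 : ∀ Y : Subgroup G, S ≤ Y → Y ≠ ⊤ → Subnormal S Y)
    (hZ : Z ≠ ⊤) (hle : cnj x S ≤ Z) : Subnormal (cnj x S) Z := by
  have h1 : S ≤ cnj x⁻¹ Z := by
    rw [← cnj_le_iff (g := x)]
    exact hle
  have h2 : cnj x⁻¹ Z ≠ ⊤ := cnj_ne_top hZ
  have := (hH1 _ h1 h2).cnj x
  rwa [cnj_cnj_inv] at this

/-- The relative normal closure `nclIn S C` is subnormal in any proper subgroup
containing it, assuming `S` is subnormal in every proper overgroup. -/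
lemma ncl_subnormal_in {S C Z : Subgroup G}
    (hH1 : ∀ Y : Subgroup G, S ≤ Y → Y ≠ ⊤ → Subnormal S Y)
    (hSZ : S ≤ Z) (hZ : Z ≠ ⊤) (hCle : nclIn S C ≤ Z) : Subnormal (nclIn S C) Z := by
  have hcnj_le : ∀ x ∈ C, cnj x S ≤ nclIn S C := by
    intro x hx y hy
    obtain ⟨a, ha, rfl⟩ := mem_cnj.mp hy
    exact conj_mem_nclIn hx ha
  suffices h : ∀ (k : ℕ) (X : Subgroup G), Nat.card G - Nat.card X ≤ k →
      X ≤ nclIn S C → Subnormal X Z → Subnormal (nclIn S C) Z by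
    exact h (Nat.card G) S (by omega) (le_nclIn S C) (hH1 Z hSZ hZ)
  intro k
  induction k with
  | zero =>
    intro X hk hX1 hX2
    exfalso
    have hXtop : X = ⊤ := by
      apply eq_of_le_of_card_le le_top
      rw [card_top_eq]
      have : Nat.card X ≤ Nat.card G := by
        have := Subgroup.card_le_of_le (le_top (a := X))
        rwa [card_top_eq] at this
      omega
    apply hZ
    rw [eq_top_iff, ← hXtop]
    exact le_trans hX1 hCle
  | succ m ih =>
    intro X hk hX1 hX2
    by_cases hall : ∀ x ∈ C, cnj x S ≤ X
    · have h1 : nclIn S C ≤ X := by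
        apply nclIn_le
        intro c hc a ha
        exact hall c hc (conj_mem_cnj ha)
      have : nclIn S C = X := le_antisymm h1 hX1
      rw [this]
      exact hX2
    · push_neg at hall
      obtain ⟨x, hx, hnle⟩ := hall
      have hXZ : X ≤ Z := le_trans hX1 hCle
      have hxZ : cnj x S ≤ Z := le_trans (hcnj_le x hx) hCle
      have hX' : Subnormal (X ⊔ cnj x S) Z :=
        rel_join hXZ hxZ hX2 (cnj_subnormal_of_le hH1 hZ hxZ)
      have hlt : X < X ⊔ cnj x S := by
        rcases lt_or_eq_of_le (le_sup_left : X ≤ X ⊔ cnj x S) with h | h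
        · exact h
        · exfalso; exact hnle (le_trans le_sup_right (le_of_eq h.symm))
      have hcard : Nat.card G - Nat.card ↥(X ⊔ cnj x S) ≤ m := by
        have h1 := card_lt_of_lt hlt
        have h2 : Nat.card ↥(X ⊔ cnj x S) ≤ Nat.card G := by
          have := Subgroup.card_le_of_le (le_top (a := X ⊔ cnj x S))
          rwa [card_top_eq] at this
        omega
      exact ih (X ⊔ cnj x S) hcard (sup_le hX1 (hcnj_le x hx)) hX'

/-- Descending through relative normal closures. -/
lemma ncl_descend {S : Subgroup G}
    (hH1 : ∀ Y : Subgroup G, S ≤ Y → Y ≠ ⊤ → Subnormal S Y) :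
    ∀ (k : ℕ) (C : Subgroup G), Nat.card C ≤ k → S < C → C ≠ ⊤ →
      ∃ D : Subgroup G, S < D ∧ D ≤ C ∧ nclIn S D = S ∧
        (D = C ∨ ∃ C' : Subgroup G, S ≤ C' ∧ C' ≠ ⊤ ∧ D = nclIn S C') := by
  intro k
  induction k with
  | zero =>
    intro C hk hSC _
    exfalso
    have : 0 < Nat.card C := Nat.card_pos
    omega
  | succ m ih =>
    intro C hk hSC hC
    by_cases hC₁ : nclIn S C = S
    · exact ⟨C, hSC, le_rfl, hC₁, Or.inl rfl⟩
    · have hle1 : S ≤ nclIn S C := le_nclIn S C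
      have hlt1 : S < nclIn S C := lt_of_le_of_ne hle1 (Ne.symm hC₁)
      have hle2 : nclIn S C ≤ C := nclIn_le_of_le hSC.le
      have hne2 : nclIn S C ≠ C := by
        intro hc
        have := stall_rel (hH1 C hSC.le hC) hc
        exact absurd this (ne_of_lt hSC)
      have hlt2 : nclIn S C < C := lt_of_le_of_ne hle2 hne2
      have hcard : Nat.card (nclIn S C) ≤ m := by
        have := card_lt_of_lt hlt2
        omega
      have hne_top : nclIn S C ≠ ⊤ := by
        intro hc
        apply hC
        rw [eq_top_iff, ← hc]
        exact hle2
      obtain ⟨D, hD1, hD2, hD3, hD4⟩ := ih (nclIn S C) hcard hlt1 hne_top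
      refine ⟨D, hD1, le_trans hD2 hle2, hD3, ?_⟩
      right
      rcases hD4 with h | ⟨C', hC'1, hC'2, hC'3⟩
      · exact ⟨C, hSC.le, hC, h⟩
      · exact ⟨C', hC'1, hC'2, hC'3⟩

/-- Subgroups whose relative closure of `S` is `S` itself normalize `S`. -/
lemma le_normalizer_of_ncl_eq {S D : Subgroup G} (hSD : S ≤ D) (h : nclIn S D = S) :
    D ≤ (Subgroup.normalizer (S : Set G)) := by
  intro x hx
  rw [Subgroup.mem_normalizer_iff]
  intro a
  constructor
  · intro ha
    exact normalizes_of_nclIn_eq h x hx a ha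
  · intro ha
    have := normalizes_of_nclIn_eq h x⁻¹ (inv_mem hx) _ ha
    have heq : x⁻¹ * (x * a * x⁻¹) * x⁻¹⁻¹ = a := by group
    rwa [heq] at this

/-- The zipper lemma (Isaacs/Wielandt): if `S` is subnormal in every proper overgroup
but not in `G`, then `S` lies in a unique maximal subgroup. -/
lemma zipper : ∀ (k : ℕ) (S : Subgroup G), Nat.card G - Nat.card S ≤ k →
    (∀ Y : Subgroup G, S ≤ Y → Y ≠ ⊤ → Subnormal S Y) → ¬ Subnormal S ⊤ →
    ∀ L₁ L₂ : Subgroup G, IsMaxSub L₁ → IsMaxSub L₂ → S ≤ L₁ → S ≤ L₂ → L₁ = L₂ := by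
  intro k
  induction k with
  | zero =>
    intro S hk hH1 hns L₁ L₂ _ _ _ _
    exfalso
    apply hns
    have hStop : S = ⊤ := by
      apply eq_of_le_of_card_le le_top
      rw [card_top_eq]
      have : Nat.card S ≤ Nat.card G := by
        have := Subgroup.card_le_of_le (le_top (a := S))
        rwa [card_top_eq] at this
      omega
    simpa [hStop] using subnormal_refl (⊤ : Subgroup G)
  | succ m ih =>
    intro S hk hH1 hns L₁ L₂ hL₁ hL₂ hSL₁ hSL₂
    have hSne : S ≠ ⊤ := by
      intro hc
      exact hns (by rw [hc]; exact subnormal_refl ⊤)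
    have hSnn : ¬ S.Normal := fun h => hns (subnormal_of_normal h)
    have hNne : (Subgroup.normalizer (S : Set G)) ≠ ⊤ := fun h => hSnn (Subgroup.normalizer_eq_top_iff.mp h)
    obtain ⟨Q, hQmax, hNQ⟩ := exists_max_over hNne
    -- it suffices to show every maximal subgroup over S equals Q
    suffices key : ∀ L : Subgroup G, IsMaxSub L → S ≤ L → L = Q by
      rw [key L₁ hL₁ hSL₁, key L₂ hL₂ hSL₂]
    intro L hL hSL
    by_cases hSeq : S = L
    · -- S itself is maximal; then S ≤ normalizer S ≤ Q forces L = Q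
      have : L ≤ Q := hSeq ▸ le_trans Subgroup.le_normalizer hNQ
      exact max_eq_of_le hL hQmax this
    · have hSlt : S < L := lt_of_le_of_ne hSL hSeq
      obtain ⟨D, hD1, hD2, hD3, hD4⟩ :=
        ncl_descend hH1 (Nat.card L) L le_rfl hSlt hL.1
      have hDnorm : D ≤ (Subgroup.normalizer (S : Set G)) := le_normalizer_of_ncl_eq hD1.le hD3
      rcases hD4 with h | ⟨C', hC'1, hC'2, hC'3⟩
      · -- D = L : L normalizes S
        have : L ≤ Q := h ▸ le_trans hDnorm hNQ
        exact max_eq_of_le hL hQmax this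
      · -- D is a relative closure: apply the inductive hypothesis to D
        have hDne : D ≠ ⊤ := by
          intro hc
          apply hL.1
          rw [eq_top_iff, ← hc]
          exact hD2
        have hH1D : ∀ Y : Subgroup G, D ≤ Y → Y ≠ ⊤ → Subnormal D Y := by
          intro Y hDY hYne
          rw [hC'3]
          exact ncl_subnormal_in hH1 (le_trans hD1.le hDY) hYne (hC'3 ▸ hDY)
        have hnsD : ¬ Subnormal D ⊤ := by
          intro hc
          exact hns ((hH1 D hD1.le hDne).trans hc)
        have hcardD : Nat.card G - Nat.card D ≤ m := by
          have h1 := card_lt_of_lt hD1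
          have h2 : Nat.card S ≤ Nat.card G := by
            have := Subgroup.card_le_of_le (le_top (a := S))
            rwa [card_top_eq] at this
          have h3 : Nat.card D ≤ Nat.card G := by
            have := Subgroup.card_le_of_le (le_top (a := D))
            rwa [card_top_eq] at this
          omega
        exact ih D hcardD hH1D hnsD L Q hL hQmax hD2 (le_trans hDnorm hNQ)
    
end Zipper

section Criterion

universe u

/-- Wielandt's subnormality criterion. -/
lemma wielandt_criterion : ∀ (n : ℕ) {G : Type u} [Group G] [Finite G] (S : Subgroup G),
    Nat.card G ≤ n → (∀ g : G, Subnormal S (S ⊔ zpowers g)) → Subnormal S ⊤ := by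
  intro n
  induction n with
  | zero =>
    intro G _ _ S hcard _
    exfalso
    have : 0 < Nat.card G := Nat.card_pos
    omega
  | succ m ih =>
    intro G _ _ S hcard hg
    classical
    by_cases hS : S = ⊤
    · rw [hS]; exact subnormal_refl ⊤
    have hH1 : ∀ Y : Subgroup G, S ≤ Y → Y ≠ ⊤ → Subnormal S Y := by
      intro Y hSY hY
      have hcardY : Nat.card Y ≤ m := by
        have h1 := card_lt_of_lt (lt_top_iff_ne_top.mpr hY)
        rw [card_top_eq] at h1
        omega
      have hyp' : ∀ y : Y, Subnormal (S.subgroupOf Y) (S.subgroupOf Y ⊔ zpowers y) := by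
        intro y
        have h1 : S ⊔ zpowers (y : G) ≤ Y := sup_le hSY (Subgroup.zpowers_le.mpr y.2)
        have h2 := (hg (y : G)).subgroupOf (Z := Y)
        have heq : (S ⊔ zpowers (y : G)).subgroupOf Y = S.subgroupOf Y ⊔ zpowers y := by
          apply Subgroup.map_injective Y.subtype_injective
          rw [Subgroup.map_sup, Subgroup.subgroupOf_map_subtype, Subgroup.subgroupOf_map_subtype,
            MonoidHom.map_zpowers, inf_eq_left.mpr h1, inf_eq_left.mpr hSY]
          rfl
        rw [heq] at h2
        exact h2
      exact (subnormal_subgroupOf_top_iff hSY).mp (ih (S.subgroupOf Y) hcardY hyp')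
    by_contra hns
    obtain ⟨M, hMmax, hSM⟩ := exists_max_over hS
    have hall : ∀ g : G, g ∈ M := by
      intro g
      have hYne : S ⊔ zpowers g ≠ ⊤ := by
        intro hc
        have := hg g
        rw [hc] at this
        exact hns this
      obtain ⟨L, hLmax, hYL⟩ := exists_max_over hYne
      have hL : L = M := zipper (Nat.card G) S (Nat.sub_le _ _) hH1 hns L M hLmax hMmax
        (le_trans le_sup_left hYL) hSM
      exact hL ▸ hYL (Subgroup.mem_sup_right (Subgroup.mem_zpowers g))
    exact absurd (eq_top_iff.mpr fun g _ => hall g) hMmax.1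

end Criterion

theorem stmt3 [Finite G] (H : Subgroup G) :
    Subnormal H ⊤ ↔ subnormalizerSet H = Set.univ := by
  constructor
  · intro h
    apply Set.eq_univ_iff_forall.mpr
    intro g
    exact h.of_le le_sup_left le_top
  · intro h
    apply wielandt_criterion (Nat.card G) H le_rfl
    intro g
    exact Set.eq_univ_iff_forall.mp h g
end

section
/- Let p be a prime and G = PSL(2, p) with p ≥ 5. For a p-element x ≠ 1 of G, the proportion λ_G(x)/n_p(G) of Sylow p-subgroups containing x equals 1/(p+1), and O_p(G) = 1. Hence the bound in the proposition 'λ_G(x)/n_p(G) > 1/(p+1) implies x ∈ O_p(G)' is sharp. -/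
open Subgroup

variable {G : Type*} [Group G]

/-- `O_p(G)`: the `p`-core, i.e. the intersection of all Sylow `p`-subgroups,
which is the largest normal `p`-subgroup of a finite group. -/
def pCore (p : ℕ) [Fact p.Prime] (G : Type*) [Group G] : Subgroup G :=
  ⨅ P : Sylow p G, (P : Subgroup G)

/-- `λ_G(x)`: the number of Sylow `p`-subgroups of `G` containing `x`. -/
noncomputable def lam (p : ℕ) [Fact p.Prime] (x : G) : ℕ :=
  Nat.card {P : Sylow p G // x ∈ P}

/-- `n_p(G)`: the number of Sylow `p`-subgroups of `G`. -/
noncomputable def np (p : ℕ) [Fact p.Prime] (G : Type*) [Group G] : ℕ :=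
  Nat.card (Sylow p G)

section AuxPSL

open Matrix

variable (p : ℕ) [Fact p.Prime]

/-- SL is equivalent to the kernel of det on GL. -/
noncomputable def slEquivKer :
    SpecialLinearGroup (Fin 2) (ZMod p) ≃
      MonoidHom.ker (GeneralLinearGroup.det : GL (Fin 2) (ZMod p) →* (ZMod p)ˣ) where
  toFun A := ⟨SpecialLinearGroup.toGL A, by
    simp [MonoidHom.mem_ker, Units.ext_iff, A.prop]⟩
  invFun g := ⟨(g.1 : Matrix (Fin 2) (Fin 2) (ZMod p)), by
    have h := g.2
    rw [MonoidHom.mem_ker, Units.ext_iff] at h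
    exact h⟩
  left_inv A := rfl
  right_inv g := Subtype.ext (Units.ext rfl)

lemma det_surj :
    Function.Surjective (GeneralLinearGroup.det : GL (Fin 2) (ZMod p) →* (ZMod p)ˣ) := by
  intro u
  have hdet : (Matrix.diagonal ![(u : ZMod p), 1]).det = (u : ZMod p) := by
    simp [Matrix.det_diagonal, Fin.prod_univ_two]
  have hinv : Invertible (Matrix.diagonal ![(u : ZMod p), 1]).det := by
    rw [hdet]; exact u.invertible
  refine ⟨GeneralLinearGroup.mk' _ hinv, Units.ext ?_⟩
  show (Matrix.diagonal ![(u : ZMod p), 1]).det = (u : ZMod p)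
  exact hdet

lemma card_SL : Nat.card (SpecialLinearGroup (Fin 2) (ZMod p)) * (p - 1)
    = (p ^ 2 - 1) * (p ^ 2 - p) := by
  have h1 : Nat.card (GL (Fin 2) (ZMod p)) = (p ^ 2 - 1) * (p ^ 2 - p) := by
    rw [Matrix.card_GL_field]
    simp [Fin.prod_univ_two, ZMod.card]
  have h2 := Subgroup.card_mul_index
    (MonoidHom.ker (GeneralLinearGroup.det : GL (Fin 2) (ZMod p) →* (ZMod p)ˣ))
  have h3 : (MonoidHom.ker (GeneralLinearGroup.det :
      GL (Fin 2) (ZMod p) →* (ZMod p)ˣ)).index = p - 1 := by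
    rw [Subgroup.index_ker, MonoidHom.range_eq_top.mpr (det_surj p)]
    rw [Subgroup.card_top, Nat.card_eq_fintype_card, ZMod.card_units_eq_totient,
      Nat.totient_prime (Fact.out : p.Prime)]
  rw [Nat.card_congr (slEquivKer p), ← h1, ← h2, h3]

lemma p_odd (h5 : 5 ≤ p) : (2 : ZMod p) ≠ 0 ∧ Odd p := by
  have hp := (Fact.out : p.Prime)
  have : p ≠ 2 := by omega
  constructor
  · intro h
    have h2 : ((2 : ℕ) : ZMod p) = 0 := by exact_mod_cast h
    rw [ZMod.natCast_eq_zero_iff] at h2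
    exact absurd (Nat.le_of_dvd (by norm_num) h2) (by omega)
  · exact hp.odd_of_ne_two this

lemma card_center (h5 : 5 ≤ p) :
    Nat.card (Subgroup.center (SpecialLinearGroup (Fin 2) (ZMod p))) = 2 := by
  rw [Nat.card_congr (SpecialLinearGroup.center_equiv_rootsOfUnity' (0 : Fin 2)).toEquiv]
  have hcard : Fintype.card (Fin 2) = 2 := rfl
  rw [hcard]
  rw [Nat.card_eq_two_iff]
  refine ⟨1, ⟨(-1 : (ZMod p)ˣ), by rw [mem_rootsOfUnity]; exact neg_one_sq⟩, ?_, ?_⟩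
  · intro h
    have h1 : ((1 : (ZMod p)ˣ) : ZMod p) = ((-1 : (ZMod p)ˣ) : ZMod p) :=
      congrArg (fun z => ((z.1 : (ZMod p)ˣ) : ZMod p)) h
    have h2 : (2 : ZMod p) = 0 := by
      simp only [Units.val_one, Units.val_neg] at h1
      linear_combination h1
    exact (p_odd p h5).1 h2
  · rw [Set.eq_univ_iff_forall]
    rintro ⟨u, hu⟩
    rw [mem_rootsOfUnity] at hu
    have : (u : ZMod p) * (u : ZMod p) = 1 := by
      have := congrArg Units.val hu
      push_cast at this
      linear_combination this
    rcases mul_self_eq_one_iff.mp this with h | h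
    · exact Set.mem_insert_iff.mpr (Or.inl (Subtype.ext (Units.ext (by simpa using h))))
    · refine Set.mem_insert_iff.mpr (Or.inr ?_)
      exact Set.mem_singleton_iff.mpr (Subtype.ext (Units.ext (by simpa using h)))

lemma card_SL' (h5 : 5 ≤ p) :
    Nat.card (SpecialLinearGroup (Fin 2) (ZMod p)) = p * (p ^ 2 - 1) := by
  have h := card_SL p
  have hp1 : 0 < p - 1 := by omega
  apply Nat.eq_of_mul_eq_mul_right hp1
  rw [h]
  have e1 : p ^ 2 - p = p * (p - 1) := by
    rw [Nat.mul_sub, mul_one, pow_two]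
  rw [e1]
  ring

lemma two_m (h5 : 5 ≤ p) : 2 * ((p ^ 2 - 1) / 2) = p ^ 2 - 1 := by
  have : Odd p := (p_odd p h5).2
  obtain ⟨k, hk⟩ := this
  subst hk
  have : (2*k+1)^2 - 1 = 2*(2*k^2+2*k) := by ring_nf; omega
  omega

lemma card_PSL (h5 : 5 ≤ p) :
    Nat.card (Matrix.ProjectiveSpecialLinearGroup (Fin 2) (ZMod p))
      = p * ((p ^ 2 - 1) / 2) := by
  have h1 := Subgroup.card_mul_index (Subgroup.center (SpecialLinearGroup (Fin 2) (ZMod p)))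
  rw [Subgroup.index_eq_card, card_center p h5, card_SL' p h5] at h1
  set m := (p ^ 2 - 1) / 2 with hm
  have h2 : 2 * m = p ^ 2 - 1 := two_m p h5
  apply Nat.eq_of_mul_eq_mul_left (show 0 < 2 by norm_num)
  rw [h1, ← h2]
  ring

lemma p_not_dvd_m (h5 : 5 ≤ p) : ¬ p ∣ (p ^ 2 - 1) / 2 := by
  intro h
  have h2 := two_m p h5
  have hdvd : p ∣ p ^ 2 - 1 := by
    obtain ⟨c, hc⟩ := h
    refine ⟨2 * c, ?_⟩
    rw [← h2, hc]
    ring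
  have hp2 : p ∣ p ^ 2 := dvd_pow_self p (by norm_num)
  have h1 : p ∣ 1 := by
    have hle : p ^ 2 - 1 ≤ p ^ 2 := Nat.sub_le _ _
    have := Nat.dvd_sub hp2 hdvd
    have hpos : 1 ≤ p ^ 2 := Nat.one_le_pow _ _ (by omega)
    have he : p ^ 2 - (p ^ 2 - 1) = 1 := by omega
    rwa [he] at this
  exact absurd (Nat.le_of_dvd one_pos h1) (by omega)

lemma sylow_card (h5 : 5 ≤ p)
    (P : Sylow p (Matrix.ProjectiveSpecialLinearGroup (Fin 2) (ZMod p))) :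
    Nat.card P = p := by
  rw [Sylow.card_eq_multiplicity, card_PSL p h5]
  have hm : ¬ p ∣ (p ^ 2 - 1) / 2 := p_not_dvd_m p h5
  have hmne : (p ^ 2 - 1) / 2 ≠ 0 := by
    have := two_m p h5
    have h4 : 25 ≤ p ^ 2 := by nlinarith
    omega
  rw [Nat.factorization_mul (by omega) hmne,
    Nat.Prime.factorization (Fact.out : p.Prime)]
  simp [Nat.factorization_eq_zero_of_not_dvd hm]

lemma divisor_arith (h5 : 5 ≤ p) (d : ℕ) (hd : d ∣ (p ^ 2 - 1) / 2)
    (hmod : d ≡ 1 [MOD p]) : d = 1 ∨ d = p + 1 := by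
  have h2 := two_m p h5
  have hpsq : 25 ≤ p ^ 2 := by nlinarith
  have hmpos : 0 < (p ^ 2 - 1) / 2 := by omega
  have hdpos : 0 < d := Nat.pos_of_dvd_of_pos hd hmpos
  have hdle : d ≤ (p ^ 2 - 1) / 2 := Nat.le_of_dvd hmpos hd
  -- d = p * k + 1
  have hmod1 : d % p = 1 := by
    have h' : d % p = 1 % p := hmod
    have h'' : 1 % p = 1 := Nat.mod_eq_of_lt (by omega)
    omega
  set k := d / p with hk
  have hdk : d = p * k + 1 := by
    have hdm := Nat.div_add_mod d p
    rw [← hk] at hdm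
    omega
  have hkp : k < p := by
    by_contra hcon
    push_neg at hcon
    have hmul : p * p ≤ p * k := Nat.mul_le_mul_left p hcon
    have hsq : p ^ 2 = p * p := sq p
    omega
  -- divisibility over ℤ
  have hdvd : (d : ℤ) ∣ (p : ℤ) ^ 2 - 1 := by
    have : d ∣ p ^ 2 - 1 := hd.trans ⟨2, by omega⟩
    exact_mod_cast Int.natCast_dvd_natCast.mpr this |>.trans (by
      push_cast [Nat.cast_sub (by omega : 1 ≤ p ^ 2)]; exact dvd_refl _)
  have hdvd2 : (d : ℤ) ∣ (k : ℤ) ^ 2 * (p : ℤ) ^ 2 - 1 := by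
    have : ((k : ℤ) * p - 1) * ((k : ℤ) * p + 1) = (k : ℤ) ^ 2 * (p : ℤ) ^ 2 - 1 := by ring
    rw [← this]
    refine Dvd.dvd.mul_left ⟨1, ?_⟩ _
    push_cast [hdk]; ring
  have hdvd3 : (d : ℤ) ∣ (k : ℤ) ^ 2 - 1 := by
    have := dvd_sub hdvd2 (Dvd.dvd.mul_left hdvd ((k : ℤ) ^ 2))
    convert this using 1
    · rfl
    · ring
  rcases Nat.lt_or_ge k 2 with hk2 | hk2
  · interval_cases k
    · left; omega
    · right; omega
  · exfalso
    have hkpos : (0 : ℤ) < (k : ℤ) ^ 2 - 1 := by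
      have : (2 : ℤ) ≤ (k : ℤ) := by exact_mod_cast hk2
      nlinarith
    have := Int.le_of_dvd hkpos hdvd3
    have hcast : (d : ℤ) = (p : ℤ) * k + 1 := by exact_mod_cast hdk
    have : (p : ℤ) > (k : ℤ) := by exact_mod_cast hkp
    nlinarith

/-- upper unitriangular -/
def uT (t : ZMod p) : SpecialLinearGroup (Fin 2) (ZMod p) :=
  ⟨!![1, t; 0, 1], by simp [Matrix.det_fin_two_of]⟩

/-- lower unitriangular -/
def lT (t : ZMod p) : SpecialLinearGroup (Fin 2) (ZMod p) :=
  ⟨!![1, 0; t, 1], by simp [Matrix.det_fin_two_of]⟩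

lemma uT_mul (a b : ZMod p) : uT p a * uT p b = uT p (a + b) := by
  apply Subtype.ext
  show (!![1, a; 0, 1] : Matrix (Fin 2) (Fin 2) (ZMod p)) * !![1, b; 0, 1] = !![1, a + b; 0, 1]
  rw [Matrix.mul_fin_two]
  congr 1 <;> ring

lemma lT_mul (a b : ZMod p) : lT p a * lT p b = lT p (a + b) := by
  apply Subtype.ext
  show (!![1, 0; a, 1] : Matrix (Fin 2) (Fin 2) (ZMod p)) * !![1, 0; b, 1] = !![1, 0; a + b, 1]
  rw [Matrix.mul_fin_two]
  congr 1 <;> ring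

/-- hom from additive group -/
def uHom : Multiplicative (ZMod p) →* SpecialLinearGroup (Fin 2) (ZMod p) where
  toFun t := uT p t.toAdd
  map_one' := by apply Subtype.ext; show _ = (1 : Matrix (Fin 2) (Fin 2) (ZMod p)); simp [uT]; rw [Matrix.one_fin_two]
  map_mul' a b := by show uT p (Multiplicative.toAdd (a * b)) = _; rw [toAdd_mul, ← uT_mul]

def lHom : Multiplicative (ZMod p) →* SpecialLinearGroup (Fin 2) (ZMod p) where
  toFun t := lT p t.toAdd
  map_one' := by apply Subtype.ext; show _ = (1 : Matrix (Fin 2) (Fin 2) (ZMod p)); simp [lT]; rw [Matrix.one_fin_two]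
  map_mul' a b := by show lT p (Multiplicative.toAdd (a * b)) = _; rw [toAdd_mul, ← lT_mul]

lemma not_center_of_entry' {A : SpecialLinearGroup (Fin 2) (ZMod p)} (h : A.1 0 1 ≠ 0) :
    A ∉ Subgroup.center (SpecialLinearGroup (Fin 2) (ZMod p)) := by
  intro hA
  obtain ⟨r, -, hr⟩ := Matrix.SpecialLinearGroup.mem_center_iff.mp hA
  apply h
  have h2 := congrFun (congrFun hr.symm 0) 1
  rw [h2]
  rw [Matrix.scalar_apply, Matrix.diagonal_apply_ne _ (by decide)]

lemma not_center_of_entry {A : SpecialLinearGroup (Fin 2) (ZMod p)} (h : A.1 1 0 ≠ 0) :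
    A ∉ Subgroup.center (SpecialLinearGroup (Fin 2) (ZMod p)) := by
  intro hA
  obtain ⟨r, -, hr⟩ := Matrix.SpecialLinearGroup.mem_center_iff.mp hA
  apply h
  have h2 := congrFun (congrFun hr.symm 1) 0
  rw [h2]
  rw [Matrix.scalar_apply, Matrix.diagonal_apply_ne _ (by decide)]

noncomputable abbrev piPSL : SpecialLinearGroup (Fin 2) (ZMod p) →*
    Matrix.ProjectiveSpecialLinearGroup (Fin 2) (ZMod p) :=
  QuotientGroup.mk' (Subgroup.center (SpecialLinearGroup (Fin 2) (ZMod p)))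

lemma uT_inv (t : ZMod p) : (uT p t)⁻¹ = uT p (-t) := by
  apply inv_eq_of_mul_eq_one_right
  rw [uT_mul]
  simp only [add_neg_cancel]
  apply Subtype.ext
  show _ = (1 : Matrix (Fin 2) (Fin 2) (ZMod p))
  simp [uT]; rw [Matrix.one_fin_two]

lemma ubar_zpow (k : ℤ) :
    (piPSL p (uT p 1)) ^ k = piPSL p (uT p ((k : ℤ) : ZMod p)) := by
  have h1 : uT p 1 = uHom p (Multiplicative.ofAdd (1 : ZMod p)) := rfl
  have h2 : (Multiplicative.ofAdd (1 : ZMod p)) ^ k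
      = Multiplicative.ofAdd ((k : ZMod p)) := by
    rw [← ofAdd_zsmul]
    congr 1
    simp [zsmul_eq_mul]
  rw [h1, ← map_zpow, ← map_zpow, h2]
  rfl

lemma ubar_pow_p : (piPSL p (uT p 1)) ^ p = 1 := by
  have := ubar_zpow p (p : ℤ)
  rw [show ((p:ℤ) : ZMod p) = 0 by simp] at this
  rw [← zpow_natCast, this]
  rw [show uT p (0 : ZMod p) = 1 from ?_]
  · simp
  · apply Subtype.ext
    show _ = (1 : Matrix (Fin 2) (Fin 2) (ZMod p))
    simp [uT]; rw [Matrix.one_fin_two]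

lemma lbar_pow_p : (piPSL p (lT p 1)) ^ p = 1 := by
  have h1 : lT p 1 = lHom p (Multiplicative.ofAdd (1 : ZMod p)) := rfl
  have h2 : (Multiplicative.ofAdd (1 : ZMod p)) ^ p
      = Multiplicative.ofAdd ((p : ZMod p)) := by
    rw [← ofAdd_nsmul]
    congr 1
    simp [nsmul_eq_mul]
  rw [h1, ← map_pow, ← map_pow, h2]
  rw [show ((p : ZMod p)) = 0 by simp]
  rw [show lHom p (Multiplicative.ofAdd (0 : ZMod p)) = 1 from ?_]
  · simp
  · rw [ofAdd_zero]; exact _root_.map_one _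

lemma one_ne_zero_zmod (h5 : 5 ≤ p) : (1 : ZMod p) ≠ 0 := by
  haveI : NeZero p := ⟨by omega⟩
  exact one_ne_zero

lemma ubar_ne_one (h5 : 5 ≤ p) : piPSL p (uT p 1) ≠ 1 := by
  intro h
  have hker : uT p 1 ∈ MonoidHom.ker (piPSL p) := h
  rw [QuotientGroup.ker_mk'] at hker
  refine not_center_of_entry' p ?_ hker
  have : (uT p 1).1 0 1 = 1 := by simp [uT]
  rw [this]
  exact one_ne_zero_zmod p h5

lemma lbar_ne_one (h5 : 5 ≤ p) : piPSL p (lT p 1) ≠ 1 := by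
  intro h
  have hker : lT p 1 ∈ MonoidHom.ker (piPSL p) := h
  rw [QuotientGroup.ker_mk'] at hker
  refine not_center_of_entry p ?_ hker
  have : (lT p 1).1 1 0 = 1 := by simp [lT]
  rw [this]
  exact one_ne_zero_zmod p h5

lemma lbar_not_zpow (h5 : 5 ≤ p) (k : ℤ) :
    (piPSL p (uT p 1)) ^ k ≠ piPSL p (lT p 1) := by
  rw [ubar_zpow]
  intro h
  rw [QuotientGroup.mk'_eq_mk'] at h
  obtain ⟨z, hz, hzeq⟩ := h
  set c : ZMod p := ((k : ℤ) : ZMod p) with hc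
  have hzval : z = (uT p (-c)) * lT p 1 := by
    rw [← uT_inv, ← hzeq, inv_mul_cancel_left]
  rw [hzval] at hz
  refine not_center_of_entry p ?_ hz
  have hentry : ((uT p (-c)) * lT p 1).1 1 0 = 1 := by
    have hval : ((uT p (-c)) * lT p 1).1
        = (!![1, -c; 0, 1] : Matrix (Fin 2) (Fin 2) (ZMod p)) * !![1, 0; 1, 1] := rfl
    rw [hval, Matrix.mul_fin_two]
    simp
  rw [hentry]
  exact one_ne_zero_zmod p h5

lemma sylow_eq_of_mem (h5 : 5 ≤ p)
    {y : Matrix.ProjectiveSpecialLinearGroup (Fin 2) (ZMod p)} (hy : y ≠ 1)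
    (P Q : Sylow p (Matrix.ProjectiveSpecialLinearGroup (Fin 2) (ZMod p)))
    (hP : y ∈ P) (hQ : y ∈ Q) : P = Q := by
  have horder : orderOf y = p := by
    have hdvd := Subgroup.orderOf_dvd_natCard (P : Subgroup (Matrix.ProjectiveSpecialLinearGroup (Fin 2) (ZMod p))) hP
    rw [sylow_card p h5 P] at hdvd
    rcases (Nat.Prime.eq_one_or_self_of_dvd (Fact.out : p.Prime) _ hdvd) with h | h
    · exact absurd (orderOf_eq_one_iff.mp h) hy
    · exact h
  have key : ∀ R : Sylow p (Matrix.ProjectiveSpecialLinearGroup (Fin 2) (ZMod p)),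
      y ∈ R → Subgroup.zpowers y = (R : Subgroup _) := by
    intro R hR
    apply Subgroup.eq_of_le_of_card_ge ((Subgroup.zpowers_le).mpr hR)
    rw [Nat.card_zpowers, horder, sylow_card p h5 R]
  exact Sylow.ext ((key P hP).symm.trans (key Q hQ))

lemma exists_distinct_sylows (h5 : 5 ≤ p) :
    ∃ P Q : Sylow p (Matrix.ProjectiveSpecialLinearGroup (Fin 2) (ZMod p)), P ≠ Q := by
  have hu : orderOf (piPSL p (uT p 1)) = p :=
    orderOf_eq_prime (ubar_pow_p p) (ubar_ne_one p h5)
  have hl : orderOf (piPSL p (lT p 1)) = p :=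
    orderOf_eq_prime (lbar_pow_p p) (lbar_ne_one p h5)
  have hup : IsPGroup p (Subgroup.zpowers (piPSL p (uT p 1))) :=
    IsPGroup.of_card (by rw [Nat.card_zpowers, hu, pow_one])
  have hlp : IsPGroup p (Subgroup.zpowers (piPSL p (lT p 1))) :=
    IsPGroup.of_card (by rw [Nat.card_zpowers, hl, pow_one])
  obtain ⟨P, hP⟩ := hup.exists_le_sylow
  obtain ⟨Q, hQ⟩ := hlp.exists_le_sylow
  refine ⟨P, Q, ?_⟩
  intro hPQ
  subst hPQ
  have h1 : piPSL p (uT p 1) ∈ P := hP (Subgroup.mem_zpowers _)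
  have h2 : piPSL p (lT p 1) ∈ P := hQ (Subgroup.mem_zpowers _)
  have hz : Subgroup.zpowers (piPSL p (uT p 1)) = (P : Subgroup (Matrix.ProjectiveSpecialLinearGroup (Fin 2) (ZMod p))) := by
    apply Subgroup.eq_of_le_of_card_ge ((Subgroup.zpowers_le).mpr h1)
    rw [Nat.card_zpowers, hu, sylow_card p h5 P]
  have h2' : piPSL p (lT p 1) ∈ (P : Subgroup (Matrix.ProjectiveSpecialLinearGroup (Fin 2) (ZMod p))) := h2
  rw [← hz] at h2'
  obtain ⟨k, hk⟩ := Subgroup.mem_zpowers_iff.mp h2'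
  exact lbar_not_zpow p h5 k hk

lemma np_eq (h5 : 5 ≤ p) :
    np p (Matrix.ProjectiveSpecialLinearGroup (Fin 2) (ZMod p)) = p + 1 := by
  obtain ⟨P, Q, hPQ⟩ := exists_distinct_sylows p h5
  have hmod : Nat.card (Sylow p (Matrix.ProjectiveSpecialLinearGroup (Fin 2) (ZMod p)))
      ≡ 1 [MOD p] := card_sylow_modEq_one p _
  have hidx : (P : Subgroup (Matrix.ProjectiveSpecialLinearGroup (Fin 2) (ZMod p))).index = (p ^ 2 - 1) / 2 := by
    have h1 := Subgroup.card_mul_index (P : Subgroup (Matrix.ProjectiveSpecialLinearGroup (Fin 2) (ZMod p)))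
    rw [sylow_card p h5 P, card_PSL p h5] at h1
    exact Nat.eq_of_mul_eq_mul_left (by omega : 0 < p) h1
  have hdvd := P.card_dvd_index
  rw [hidx] at hdvd
  rcases divisor_arith p h5 _ hdvd hmod with h | h
  · exfalso
    rw [Nat.card_eq_one_iff_unique] at h
    exact hPQ (h.1.elim P Q)
  · exact h

lemma lam_eq (h5 : 5 ≤ p) {x : Matrix.ProjectiveSpecialLinearGroup (Fin 2) (ZMod p)}
    (hx : x ≠ 1) (hxp : ∃ n : ℕ, orderOf x = p ^ n) : lam p x = 1 := by
  obtain ⟨n, hn⟩ := hxp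
  have hpg : IsPGroup p (Subgroup.zpowers x) :=
    IsPGroup.of_card (by rw [Nat.card_zpowers, hn])
  obtain ⟨P, hP⟩ := hpg.exists_le_sylow
  rw [lam, Nat.card_eq_one_iff_unique]
  constructor
  · exact ⟨fun a b => Subtype.ext (sylow_eq_of_mem p h5 hx a b a.2 b.2)⟩
  · exact ⟨⟨P, hP (Subgroup.mem_zpowers x)⟩⟩

lemma pCore_eq (h5 : 5 ≤ p) :
    pCore p (Matrix.ProjectiveSpecialLinearGroup (Fin 2) (ZMod p)) = ⊥ := by
  obtain ⟨P, Q, hPQ⟩ := exists_distinct_sylows p h5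
  rw [pCore, eq_bot_iff]
  intro y hy
  rw [Subgroup.mem_bot]
  by_contra hy1
  have hyP : y ∈ (P : Subgroup (Matrix.ProjectiveSpecialLinearGroup (Fin 2) (ZMod p))) :=
    (iInf_le (fun R : Sylow p (Matrix.ProjectiveSpecialLinearGroup (Fin 2) (ZMod p)) =>
      (R : Subgroup (Matrix.ProjectiveSpecialLinearGroup (Fin 2) (ZMod p)))) P) hy
  have hyQ : y ∈ (Q : Subgroup (Matrix.ProjectiveSpecialLinearGroup (Fin 2) (ZMod p))) :=
    (iInf_le (fun R : Sylow p (Matrix.ProjectiveSpecialLinearGroup (Fin 2) (ZMod p)) =>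
      (R : Subgroup (Matrix.ProjectiveSpecialLinearGroup (Fin 2) (ZMod p)))) Q) hy
  exact hPQ (sylow_eq_of_mem p h5 hy1 P Q hyP hyQ)


end AuxPSL

open Matrix in
theorem stmt9 (p : ℕ) [Fact p.Prime] (hp : 5 ≤ p)
    (x : ProjectiveSpecialLinearGroup (Fin 2) (ZMod p)) (hx : x ≠ 1)
    (hxp : ∃ n : ℕ, orderOf x = p ^ n) :
    (lam p x : ℚ) / (np p (ProjectiveSpecialLinearGroup (Fin 2) (ZMod p)) : ℚ)
        = 1 / (p + 1) ∧
      pCore p (ProjectiveSpecialLinearGroup (Fin 2) (ZMod p)) = ⊥ := by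
  refine ⟨?_, pCore_eq p hp⟩
  rw [lam_eq p hp hx hxp, np_eq p hp]
  push_cast
  ring
end

section
/- Let G be a finite group and x ∈ G with ⟨x⟩ subnormal in G. If x = x_p·x_{p'} is the decomposition of x into its p-part and p'-part, then ⟨x_p⟩ is subnormal in G and x_p ∈ O_p(G). -/
open Subgroup

variable {G : Type*} [Group G]

lemma chain_mono' {c : ℕ → Subgroup G} {n : ℕ} (h : ∀ i < n, c i ≤ c (i + 1)) :
    ∀ i j, i ≤ j → j ≤ n → c i ≤ c j := by
  intro i j hij
  induction hij with
  | refl => intro _; exact le_rfl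
  | step h2 ihh =>
    intro hjn
    exact le_trans (ihh (by omega)) (h _ (by omega))

lemma normal_pGroup_le_pCore {G : Type*} [Group G] (p : ℕ) [Fact p.Prime]
    {N : Subgroup G} (hN : N.Normal) (hp : IsPGroup p N) : N ≤ pCore p G := by
  haveI := hN
  refine le_iInf fun P => ?_
  have : N ⊔ (P : Subgroup G) = P := P.3 (hp.to_sup_of_normal_left P.2) le_sup_right
  calc N ≤ N ⊔ (P : Subgroup G) := le_sup_left
    _ = P := this

universe u

lemma subnormal_pGroup_le_pCore (p : ℕ) [Fact p.Prime] :
    ∀ n : ℕ, ∀ (G : Type u) [Group G] [Finite G] (H : Subgroup G),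
      IsPGroup p H → ∀ c : ℕ → Subgroup G, c 0 = H → c n = ⊤ →
      (∀ i < n, c i ≤ c (i + 1) ∧ ∀ x ∈ c (i + 1), ∀ h ∈ c i, x * h * x⁻¹ ∈ c i) →
      H ≤ pCore p G := by
  intro n
  induction n with
  | zero =>
    intro G _ _ H hp c h0 htop _
    have : H = ⊤ := by rw [← h0, htop]
    subst this
    refine le_iInf fun P => ?_
    have := P.3 hp le_top
    rw [← this]
  | succ n ih =>
    intro G _ _ H hp c h0 htop hchain
    set K := c n with hK
    haveI hKnorm : K.Normal := by
      constructor
      intro h hh g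
      exact (hchain n (Nat.lt_succ_self n)).2 g (by rw [htop]; trivial) h hh
    have hmono : ∀ i ≤ n, c i ≤ K := fun i hi =>
      chain_mono' (fun j hj => (hchain j (by omega)).1) i n hi le_rfl
    have hHK : H ≤ K := h0 ▸ hmono 0 (Nat.zero_le n)
    -- the restricted chain in K
    set c' : ℕ → Subgroup K := fun i => (c i).subgroupOf K with hc'
    have h0' : c' 0 = H.subgroupOf K := by rw [hc']; simp [h0]
    have htop' : c' n = ⊤ := by
      show K.subgroupOf K = ⊤
      exact Subgroup.subgroupOf_self (H := K)
    have hchain' : ∀ i < n, c' i ≤ c' (i + 1) ∧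
        ∀ x ∈ c' (i + 1), ∀ h ∈ c' i, x * h * x⁻¹ ∈ c' i := by
      intro i hi
      refine ⟨?_, ?_⟩
      · intro a ha
        rw [mem_subgroupOf] at ha ⊢
        exact (hchain i (by omega)).1 ha
      · intro x hx h hh
        rw [mem_subgroupOf] at hx hh ⊢
        exact (hchain i (by omega)).2 x hx h hh
    have hIH : H.subgroupOf K ≤ pCore p K :=
      ih K (H.subgroupOf K) (hp.comap_subtype) c' h0' htop' hchain'
    -- push back to G
    set N : Subgroup G := (pCore p K).map K.subtype with hN
    have hHN : H ≤ N := by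
      have := map_mono (f := K.subtype) hIH
      rwa [subgroupOf_map_subtype, inf_eq_left.mpr hHK] at this
    have hNp : IsPGroup p N := by
      obtain ⟨Q₀⟩ : Nonempty (Sylow p K) := inferInstance
      exact ((Q₀.2.to_le (iInf_le _ Q₀)).map K.subtype)
    have hNnorm : N.Normal := by
      constructor
      intro h hh g
      obtain ⟨k, hk, rfl⟩ := hh
      refine ⟨MulAut.conjNormal g k, ?_, rfl⟩
      have hk' : ∀ Q : Sylow p K, k ∈ (Q : Subgroup K) := fun Q => Subgroup.mem_iInf.mp hk Q
      refine Subgroup.mem_iInf.mpr fun Q => ?_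
      set e : K ≃* K := MulAut.conjNormal g with he
      have hrange : (Q : Subgroup K) ≤ e.toMonoidHom.range := by
        intro y _
        exact ⟨e.symm y, e.apply_symm_apply y⟩
      have := hk' (Q.comapOfInjective e.toMonoidHom e.injective hrange)
      change k ∈ (Q : Subgroup K).comap e.toMonoidHom at this
      rw [Subgroup.mem_comap] at this
      simpa using this
    exact le_trans hHN (normal_pGroup_le_pCore p hNnorm hNp)

theorem stmt11 [Finite G] (p : ℕ) [Fact p.Prime] (x xp xq : G)
    (hsub : Subnormal (zpowers x) ⊤)
    (hmul : x = xp * xq) (hcomm : Commute xp xq)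
    (hxp : xp ∈ zpowers x) (hxq : xq ∈ zpowers x)
    (hordp : ∃ a : ℕ, orderOf xp = p ^ a) (hordq : ¬ p ∣ orderOf xq) :
    Subnormal (zpowers xp) ⊤ ∧ xp ∈ pCore p G := by
  obtain ⟨n, c, h0, htop, hchain⟩ := hsub
  obtain ⟨a, ha⟩ := hordp
  have hp : IsPGroup p (zpowers xp) := IsPGroup.of_card (by rw [Nat.card_zpowers, ha])
  set c2 : ℕ → Subgroup G := fun i => match i with
    | 0 => zpowers xp
    | (j+1) => c j with hc2
  have h02 : c2 0 = zpowers xp := rfl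
  have htop2 : c2 (n + 1) = ⊤ := htop
  have hchain2 : ∀ i < n + 1, c2 i ≤ c2 (i + 1) ∧
      ∀ y ∈ c2 (i + 1), ∀ h ∈ c2 i, y * h * y⁻¹ ∈ c2 i := by
    intro i hi
    match i with
    | 0 =>
      constructor
      · show zpowers xp ≤ c 0
        rw [h0]
        exact zpowers_le.mpr hxp
      · intro y hy h hh
        show y * h * y⁻¹ ∈ zpowers xp
        have hy' : y ∈ zpowers x := by rw [← h0]; exact hy
        have hh' : h ∈ zpowers x := zpowers_le.mpr hxp hh
        obtain ⟨m, rfl⟩ := hy'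
        obtain ⟨k, hk⟩ := hh'
        have hcom : Commute (x ^ m) h := by
          rw [← hk]; exact (Commute.refl x).zpow_zpow m k
        rw [hcom.eq, mul_assoc, mul_inv_cancel, mul_one]
        exact hh
    | (j+1) =>
      exact hchain j (by omega)
  refine ⟨⟨n + 1, c2, h02, htop2, hchain2⟩, ?_⟩
  have := subnormal_pGroup_le_pCore p (n + 1) G (zpowers xp) hp c2 h02 htop2 hchain2
  exact this (mem_zpowers xp)
end

section
/- Let G be a finite Frobenius group G = N ⋊ ⟨x⟩ where N is elementary abelian of order p^k, |x| = q prime, q ≠ p, and C_N(x) = 1. Then dn(G) = 1/(p^k q) + (p^k − 1)/(p^k q²) + (q−1)/(p^k q), and for 1 ≠ a ∈ N one has Nil_G(a) = N, while for y ∉ N one has Nil_G(y) = ⟨y⟩. -/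
open Subgroup

/-- The degree of nilpotence of a group: the probability that two random
elements generate a nilpotent subgroup. -/
noncomputable def dn (G : Type*) [Group G] : ℚ :=
  (Nat.card {p : G × G // Group.IsNilpotent ↥(closure ({p.1, p.2} : Set G))} : ℚ) /
    (Nat.card G : ℚ) ^ 2

/-- `Nil_G(x)`: the set of `y` such that `⟨x, y⟩` is nilpotent. -/
def NilSet {G : Type*} [Group G] (x : G) : Set G :=
  {y : G | Group.IsNilpotent ↥(closure ({x, y} : Set G))}

theorem nilp_of_le_comm {G : Type*} [Group G] {K H : Subgroup G}
    (habel : ∀ a ∈ K, ∀ b ∈ K, a * b = b * a) (hle : H ≤ K) :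
    Group.IsNilpotent H := by
  letI : CommGroup K :=
    { (inferInstance : Group K) with
      mul_comm := fun a b => Subtype.ext (habel a a.2 b b.2) }
  haveI : Group.IsNilpotent K := CommGroup.isNilpotent
  exact (Group.isNilpotent_congr (Subgroup.subgroupOfEquivOfLe hle)).mp inferInstance

theorem commute_of_nilpotent_orders {H : Type*} [Group H] [Finite H] [Group.IsNilpotent H]
    {p q : ℕ} (hp : p.Prime) (hq : q.Prime) (hpq : p ≠ q) {a b : H}
    (ha : orderOf a = p) (hb : orderOf b = q) : Commute a b := by
  have hsyl : ∀ (r : ℕ), Fact r.Prime → ∀ P : Sylow r H, (P : Subgroup H).Normal :=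
    ((isNilpotent_of_finite_tfae (G := H)).out 0 3).mp ‹_›
  have hA : IsPGroup p (zpowers a) := IsPGroup.of_card (n := 1)
    (by rw [Nat.card_zpowers, ha, pow_one])
  have hB : IsPGroup q (zpowers b) := IsPGroup.of_card (n := 1)
    (by rw [Nat.card_zpowers, hb, pow_one])
  haveI := Fact.mk hp; haveI := Fact.mk hq
  obtain ⟨P, hP⟩ := hA.exists_le_sylow
  obtain ⟨Q, hQ⟩ := hB.exists_le_sylow
  exact Subgroup.commute_of_normal_of_disjoint P Q (hsyl p ⟨hp⟩ P) (hsyl q ⟨hq⟩ Q)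
    (IsPGroup.disjoint_of_ne p q hpq _ _ P.isPGroup' Q.isPGroup')
    a b (hP (mem_zpowers a)) (hQ (mem_zpowers b))

theorem stmt14 {G : Type*} [Group G] [Finite G] (N : Subgroup G) (hNn : N.Normal)
    (p q k : ℕ) (hp : p.Prime) (hq : q.Prime) (hpq : p ≠ q) (hk : 1 ≤ k)
    (hcard : Nat.card N = p ^ k)
    (helem : ∀ a ∈ N, a ^ p = 1) (habel : ∀ a ∈ N, ∀ b ∈ N, a * b = b * a)
    (x : G) (hordx : orderOf x = q)
    (hint : N ⊓ zpowers x = ⊥) (hgen : N ⊔ zpowers x = ⊤)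
    (hfpf : ∀ a ∈ N, a ≠ 1 → x * a * x⁻¹ ≠ a) :
    (∀ a ∈ N, a ≠ 1 → NilSet a = (N : Set G)) ∧
    (∀ y : G, y ∉ N → NilSet y = (zpowers y : Set G)) ∧
    dn G = 1 / ((p : ℚ) ^ k * q) + ((p : ℚ) ^ k - 1) / ((p : ℚ) ^ k * q ^ 2)
      + ((q : ℚ) - 1) / ((p : ℚ) ^ k * q) := by
  have hq1 : 1 < q := hq.one_lt
  have hxq : x ^ q = 1 := by rw [← hordx]; exact pow_orderOf_eq_one x
  -- decomposition
  have hdecomp : ∀ g : G, ∃ n ∈ N, ∃ m : ℕ, g = n * x ^ m := by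
    intro g
    have hg : g ∈ (↑(N ⊔ zpowers x) : Set G) := by rw [hgen]; trivial
    rw [Subgroup.normal_mul] at hg
    obtain ⟨n, hn, y, hy, rfl⟩ := hg
    obtain ⟨m, rfl⟩ := (mem_powers_iff_mem_zpowers).mpr hy
    exact ⟨n, hn, m, rfl⟩
  -- fixed-point-freeness for all powers
  have hfpf' : ∀ m : ℕ, ¬ q ∣ m → ∀ a ∈ N, Commute a (x ^ m) → a = 1 := by
    intro m hm a ha hcomm
    have hc : Nat.Coprime m q := (Nat.coprime_comm).mp ((hq.coprime_iff_not_dvd).mpr hm)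
    obtain ⟨u, -, hu⟩ := Nat.exists_mul_mod_eq_one_of_coprime hc hq1
    have h2 : Commute a (x ^ (m * u)) := by rw [pow_mul]; exact hcomm.pow_right u
    rw [← pow_mod_orderOf, hordx, hu, pow_one] at h2
    by_contra hne
    exact hfpf a ha hne (by rw [← h2.eq, mul_inv_cancel_right])
  -- commuting with an element outside N
  have hout : ∀ g ∉ N, ∀ a ∈ N, Commute a g → a = 1 := by
    intro g hg a ha hcomm
    obtain ⟨n, hn, m, rfl⟩ := hdecomp g
    have hm : ¬ q ∣ m := by
      rintro ⟨c, rfl⟩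
      rw [pow_mul, hxq, one_pow, mul_one] at hg
      exact hg hn
    have hcn : Commute a n := habel a ha n hn
    have : Commute a (x ^ m) := by
      have h3 : x ^ m = n⁻¹ * (n * x ^ m) := by group
      rw [h3]; exact hcn.inv_right.mul_right hcomm
    exact hfpf' m hm a ha this
  -- index of N
  have hidx : Nat.card (G ⧸ N) = q := by
    let φ : zpowers x →* G ⧸ N := (QuotientGroup.mk' N).comp (Subgroup.subtype _)
    have hbij : Function.Bijective φ := by
      constructor
      · intro ⟨y, hy⟩ ⟨z, hz⟩ h
        simp only [φ, MonoidHom.comp_apply, QuotientGroup.mk'_apply, Subgroup.coe_subtype] at h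
        have h2 : y⁻¹ * z ∈ N := (QuotientGroup.eq).mp h
        have h3 : y⁻¹ * z ∈ N ⊓ zpowers x :=
          ⟨h2, (mul_mem (inv_mem hy) hz : y⁻¹ * z ∈ zpowers x)⟩
        rw [hint, Subgroup.mem_bot] at h3
        ext
        exact (inv_mul_eq_one.mp h3)
      · intro g
        induction g using QuotientGroup.induction_on with
        | H g =>
          obtain ⟨n, hn, m, rfl⟩ := hdecomp g
          refine ⟨⟨x ^ m, pow_mem (mem_zpowers x) m⟩, ?_⟩
          · show QuotientGroup.mk (x ^ m) = QuotientGroup.mk (n * x ^ m)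
            rw [QuotientGroup.eq]
            simpa [mul_assoc] using hNn.conj_mem n hn (x ^ m)⁻¹
    calc Nat.card (G ⧸ N) = Nat.card (zpowers x) := (Nat.card_eq_of_bijective φ hbij).symm
      _ = q := by rw [Nat.card_zpowers, hordx]
  have hcardG : Nat.card G = p ^ k * q := by
    rw [← Subgroup.card_mul_index N, hcard, Subgroup.index_eq_card, hidx]
  -- every element outside N has order q
  have hordout : ∀ g ∉ N, orderOf g = q := by
    intro g hg
    have hgq : g ^ q ∈ N := by
      have : ((g : G ⧸ N) : G ⧸ N) ^ q = 1 := by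
        rw [← hidx]; exact pow_card_eq_one'
      rwa [← QuotientGroup.mk_pow, QuotientGroup.eq_one_iff] at this
    have h1 : g ^ q = 1 := hout g hg (g ^ q) hgq ((Commute.refl g).pow_left q)
    have hdvd := orderOf_dvd_of_pow_eq_one h1
    rcases (Nat.Prime.eq_one_or_self_of_dvd hq _ hdvd) with h | h
    · exfalso
      have : g = 1 := orderOf_eq_one_iff.mp h
      exact hg (this ▸ one_mem N)
    · exact h
  have hordin : ∀ a ∈ N, a ≠ 1 → orderOf a = p := by
    intro a ha hne
    rcases (Nat.Prime.eq_one_or_self_of_dvd hp _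
      (orderOf_dvd_of_pow_eq_one (helem a ha))) with h | h
    · exact absurd (orderOf_eq_one_iff.mp h) hne
    · exact h
  -- commuting from nilpotent subgroup with orders p and q
  have hcomm_trans : ∀ (H : Subgroup G), Group.IsNilpotent ↥H → ∀ g ∈ H, ∀ h ∈ H,
      orderOf g = p → orderOf h = q → Commute g h := by
    intro H hnil g hg h hh hog hoh
    have h1 : orderOf (⟨g, hg⟩ : H) = p := by
      rw [← hog]; exact (orderOf_injective H.subtype (subtype_injective H) ⟨g, hg⟩).symm
    have h2 : orderOf (⟨h, hh⟩ : H) = q := by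
      rw [← hoh]; exact (orderOf_injective H.subtype (subtype_injective H) ⟨h, hh⟩).symm
    have hc := commute_of_nilpotent_orders hp hq hpq h1 h2
    exact (by simpa using Subtype.ext_iff.mp hc : g * h = h * g)
  have hzpow_comm : ∀ y : G, ∀ a ∈ zpowers y, ∀ b ∈ zpowers y, a * b = b * a := by
    intro y a ha b hb
    obtain ⟨i, rfl⟩ := Subgroup.mem_zpowers_iff.mp ha
    obtain ⟨j, rfl⟩ := Subgroup.mem_zpowers_iff.mp hb
    exact Commute.zpow_zpow_self y i j
  have claimA : ∀ a ∈ N, a ≠ 1 → NilSet a = (N : Set G) := by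
    intro a ha hane
    ext z
    simp only [NilSet, Set.mem_setOf_eq, SetLike.mem_coe]
    constructor
    · intro hnil
      by_contra hzN
      have hca : Commute a z := hcomm_trans _ hnil a (subset_closure (by simp)) z
        (subset_closure (by simp)) (hordin a ha hane) (hordout z hzN)
      exact hane (hout z hzN a ha hca)
    · intro hz
      exact nilp_of_le_comm habel ((closure_le _).mpr
        (Set.insert_subset_iff.mpr ⟨ha, Set.singleton_subset_iff.mpr hz⟩))
  have claimB : ∀ y : G, y ∉ N → NilSet y = (zpowers y : Set G) := by
    intro y hy
    ext z
    simp only [NilSet, Set.mem_setOf_eq, SetLike.mem_coe]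
    constructor
    · intro hnil
      set H := closure ({y, z} : Set G) with hH
      have hyH : y ∈ H := subset_closure (by simp)
      have key : ∀ w ∈ H, w ∈ N → w = 1 := by
        intro w hwH hwN
        by_contra hw1
        exact hw1 (hout y hy w hwN
          (hcomm_trans H hnil w hwH y hyH (hordin w hwN hw1) (hordout y hy)))
      have hinj : Function.Injective ((QuotientGroup.mk' N).comp H.subtype) := by
        intro h1 h2 he
        simp only [MonoidHom.comp_apply, QuotientGroup.mk'_apply, Subgroup.coe_subtype] at he
        have h3 : ((h1 : G))⁻¹ * (h2 : G) ∈ N := QuotientGroup.eq.mp he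
        have h4 := key _ (mul_mem (inv_mem h1.2) h2.2) h3
        exact Subtype.ext (inv_mul_eq_one.mp h4)
      have hle : Nat.card H ≤ q := by
        rw [← hidx]; exact Nat.card_le_card_of_injective _ hinj
      have hzle : zpowers y ≤ H := zpowers_le.mpr hyH
      have hcz : Nat.card (zpowers y) = q := by rw [Nat.card_zpowers, hordout y hy]
      have heq : zpowers y = H := Subgroup.eq_of_le_of_card_ge hzle (by rw [hcz]; exact hle)
      rw [heq]
      exact subset_closure (by simp)
    · intro hz
      exact nilp_of_le_comm (hzpow_comm y) ((closure_le _).mpr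
        (Set.insert_subset_iff.mpr ⟨mem_zpowers y, Set.singleton_subset_iff.mpr hz⟩))
  have claim1 : NilSet (1 : G) = Set.univ := by
    ext z
    simp only [NilSet, Set.mem_setOf_eq, Set.mem_univ, iff_true]
    exact nilp_of_le_comm (hzpow_comm z) ((closure_le _).mpr
      (Set.insert_subset_iff.mpr ⟨one_mem _, Set.singleton_subset_iff.mpr (mem_zpowers z)⟩))
  classical
  haveI : Fintype G := Fintype.ofFinite G
  have hcount : Nat.card {pr : G × G // Group.IsNilpotent ↥(closure ({pr.1, pr.2} : Set G))}
      = ∑ g : G, Nat.card (NilSet g) := by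
    have e : {pr : G × G // Group.IsNilpotent ↥(closure ({pr.1, pr.2} : Set G))}
        ≃ Σ g : G, {h : G // h ∈ NilSet g} :=
      Equiv.subtypeProdEquivSigmaSubtype (fun a b : G => b ∈ NilSet a)
    rw [Nat.card_congr e, Nat.card_eq_fintype_card, Fintype.card_sigma]
    exact Finset.sum_congr rfl fun g _ => (Nat.card_eq_fintype_card).symm
  have hval1 : Nat.card (NilSet (1 : G)) = p ^ k * q := by
    rw [claim1, ← hcardG]
    exact Nat.card_congr (Equiv.Set.univ G)
  have hvalN : ∀ g ∈ N, g ≠ 1 → Nat.card (NilSet g) = p ^ k := by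
    intro g hg hg1
    rw [claimA g hg hg1]
    simpa using hcard
  have hvalO : ∀ g : G, g ∉ N → Nat.card (NilSet g) = q := by
    intro g hg
    rw [claimB g hg, SetLike.coe_sort_coe, Nat.card_zpowers]
    exact hordout g hg
  have h1N : (1 : G) ∈ Finset.univ.filter (fun g => g ∈ N) := by simp [one_mem]
  have hcards : (Finset.univ.filter (fun g : G => g ∈ N)).card = p ^ k := by
    rw [← Fintype.card_subtype, ← Nat.card_eq_fintype_card]
    exact hcard
  have hcardG' : Fintype.card G = p ^ k * q := by
    rw [← Nat.card_eq_fintype_card]; exact hcardG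
  have hcardt : (Finset.univ.filter (fun g : G => ¬ g ∈ N)).card = p ^ k * q - p ^ k := by
    have hpart := Finset.card_filter_add_card_filter_not
      (s := (Finset.univ : Finset G)) (p := fun g : G => g ∈ N)
    rw [Finset.card_univ, hcardG', hcards] at hpart
    omega
  have hsum : ∑ g : G, Nat.card (NilSet g)
      = p ^ k * q + (p ^ k - 1) * p ^ k + (p ^ k * q - p ^ k) * q := by
    rw [← Finset.sum_filter_add_sum_filter_not Finset.univ (fun g : G => g ∈ N)
      (fun g => Nat.card (NilSet g))]
    have hfirst : ∑ g ∈ Finset.univ.filter (fun g : G => g ∈ N), Nat.card (NilSet g)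
        = p ^ k * q + (p ^ k - 1) * p ^ k := by
      rw [← Finset.add_sum_erase _ _ h1N, hval1]
      congr 1
      have hc : ∀ g ∈ (Finset.univ.filter (fun g : G => g ∈ N)).erase 1,
          Nat.card (NilSet g) = p ^ k := by
        intro g hg
        have hg1 : g ≠ 1 := (Finset.mem_erase.mp hg).1
        have hgN : g ∈ N := by
          have := (Finset.mem_erase.mp hg).2
          simpa using this
        exact hvalN g hgN hg1
      rw [Finset.sum_congr rfl hc, Finset.sum_const, smul_eq_mul,
        Finset.card_erase_of_mem h1N, hcards]
    have hsecond : ∑ g ∈ Finset.univ.filter (fun g : G => ¬ g ∈ N), Nat.card (NilSet g)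
        = (p ^ k * q - p ^ k) * q := by
      have hc : ∀ g ∈ Finset.univ.filter (fun g : G => ¬ g ∈ N), Nat.card (NilSet g) = q := by
        intro g hg
        exact hvalO g (by simpa using (Finset.mem_filter.mp hg).2)
      rw [Finset.sum_congr rfl hc, Finset.sum_const, smul_eq_mul, hcardt]
    rw [hfirst, hsecond]
  refine ⟨claimA, claimB, ?_⟩
  have h1p : 1 ≤ p ^ k := Nat.one_le_pow k p hp.pos
  have h2p : p ^ k ≤ p ^ k * q := Nat.le_mul_of_pos_right _ hq.pos
  have hp0 : ((p : ℚ)) ^ k ≠ 0 := pow_ne_zero k (Nat.cast_ne_zero.mpr hp.pos.ne')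
  have hq0 : (q : ℚ) ≠ 0 := Nat.cast_ne_zero.mpr hq.pos.ne'
  unfold dn
  rw [hcount, hsum, hcardG]
  push_cast [Nat.cast_sub h1p, Nat.cast_sub h2p]
  field_simp
end
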